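/- arXiv:1312.5431 — 6 statements merged into one kernel-verified Lean document; each statement's English description precedes it below -/
import Mathlib

section
/- Let Γ be a group and let φ : I[Γ] → ℝ be a positive linear functional, i.e., φ is linear, φ(ξ*) = φ(ξ) for all ξ ∈ I[Γ], and φ(η) ≥ 0 for all η ∈ Σ²I[Γ]. Then there exists a sequence of positive linear functionals φₙ : ℝ[Γ] → ℝ (linear, φₙ(ξ*) = φₙ(ξ), and φₙ(η) ≥ 0 for all η ∈ Σ²ℝ[Γ]) such that φₙ(ξ) → φ(ξ) as n → ∞ for every ξ ∈ I[Γ]. -/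
open MonoidAlgebra Finset RealInnerProductSpace

/-- The involution `ξ*(x) = ξ(x⁻¹)` on the real group algebra `ℝ[Γ]`. -/
def astar {Γ : Type*} [Group Γ] (ξ : MonoidAlgebra ℝ Γ) : MonoidAlgebra ℝ Γ :=
  MonoidAlgebra.ofCoeff (Finsupp.equivMapDomain (Equiv.inv Γ) ξ.coeff)

/-- The augmentation character `ℝ[Γ] → ℝ`, `ξ ↦ Σ_x ξ(x)`. -/
noncomputable def aug (Γ : Type*) [Group Γ] : MonoidAlgebra ℝ Γ →ₐ[ℝ] ℝ :=
  MonoidAlgebra.lift ℝ ℝ Γ 1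

/-- The augmentation ideal `I[Γ] = {ξ ∈ ℝ[Γ] : Σ_x ξ(x) = 0}`, as an `ℝ`-submodule. -/
noncomputable def augIdeal (Γ : Type*) [Group Γ] : Submodule ℝ (MonoidAlgebra ℝ Γ) :=
  LinearMap.ker (aug Γ).toLinearMap

/-- `Σ²ℝ[Γ]`, the set of finite sums of hermitian squares in `ℝ[Γ]`. -/
def SOS (Γ : Type*) [Group Γ] : Set (MonoidAlgebra ℝ Γ) :=
  {ξ | ∃ (n : ℕ) (f : Fin n → MonoidAlgebra ℝ Γ), ξ = ∑ i, astar (f i) * f i}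

/-- `Σ²I[Γ]`, the set of finite sums of hermitian squares of elements of `I[Γ]`. -/
def SOSI (Γ : Type*) [Group Γ] : Set (MonoidAlgebra ℝ Γ) :=
  {ξ | ∃ (n : ℕ) (f : Fin n → MonoidAlgebra ℝ Γ),
    (∀ i, f i ∈ augIdeal Γ) ∧ ξ = ∑ i, astar (f i) * f i}

lemma aug_astar {Γ : Type*} [Group Γ] (ξ : MonoidAlgebra ℝ Γ) : aug Γ (astar ξ) = aug Γ ξ := by
  simp [aug, MonoidAlgebra.lift_apply, astar, Finsupp.sum_equivMapDomain]

lemma one_sub_of_mem_augIdeal {Γ : Type*} [Group Γ] (x : Γ) :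
    (1 : MonoidAlgebra ℝ Γ) - of ℝ Γ x ∈ augIdeal Γ := by
  simp [augIdeal, aug]

lemma astar_mem_augIdeal {Γ : Type*} [Group Γ] {ξ : MonoidAlgebra ℝ Γ} (h : ξ ∈ augIdeal Γ) :
    astar ξ ∈ augIdeal Γ := by
  have h' : aug Γ ξ = 0 := h
  simp [augIdeal, aug_astar, h']

lemma astar_mul_self_mem_augIdeal {Γ : Type*} [Group Γ] {ξ : MonoidAlgebra ℝ Γ}
    (h : ξ ∈ augIdeal Γ) : astar ξ * ξ ∈ augIdeal Γ := by
  have h' : aug Γ ξ = 0 := h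
  simp [augIdeal, aug_astar, h']


section PosKernel
variable {ι : Type*} [Fintype ι]

/-- Positive semidefiniteness of a kernel, in quadratic-form language. -/
def PosK (K : ι → ι → ℝ) : Prop := ∀ v : ι → ℝ, 0 ≤ ∑ i, ∑ j, v i * v j * K i j

lemma PosK.smulK {K : ι → ι → ℝ} (h : PosK K) {t : ℝ} (ht : 0 ≤ t) :
    PosK (fun i j => t * K i j) := by
  intro v
  calc (0:ℝ) ≤ t * ∑ i, ∑ j, v i * v j * K i j := mul_nonneg ht (h v)
    _ = ∑ i, ∑ j, v i * v j * (t * K i j) := by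
        rw [Finset.mul_sum]; refine Finset.sum_congr rfl fun i _ => ?_
        rw [Finset.mul_sum]; refine Finset.sum_congr rfl fun j _ => ?_
        ring

lemma posK_decomp [DecidableEq ι] {K : ι → ι → ℝ} (hsymm : ∀ i j, K i j = K j i)
    (h : PosK K) : ∃ w : ι → ι → ℝ, ∀ i j, K i j = ∑ l, w l i * w l j := by
  have hherm : (Matrix.of K).IsHermitian := by
    ext i j
    simp [Matrix.conjTranspose_apply, hsymm i j]
  have hpsd : (Matrix.of K).PosSemidef := by
    refine Matrix.posSemidef_iff_dotProduct_mulVec.mpr ⟨hherm, fun v => ?_⟩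
    have := h v
    simpa [dotProduct, Matrix.mulVec, Finset.mul_sum, mul_assoc,
      mul_comm, mul_left_comm] using this
  obtain ⟨B, hB⟩ : ∃ B : Matrix ι ι ℝ, Matrix.of K = B.conjTranspose * B := by
    open scoped MatrixOrder in
    exact ⟨CFC.sqrt (Matrix.of K), by
      rw [(Matrix.nonneg_iff_posSemidef.mp (CFC.sqrt_nonneg (Matrix.of K))).1.eq, CFC.sqrt_mul_sqrt_self _ hpsd.nonneg]⟩
  refine ⟨fun l i => B l i, fun i j => ?_⟩
  have h2 : Matrix.of K i j = (B.conjTranspose * B) i j := by rw [hB]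
  simpa [Matrix.mul_apply, Matrix.conjTranspose_apply] using h2

lemma PosK.mul_of_decomp {K K' : ι → ι → ℝ}
    (hK : ∃ w : ι → ι → ℝ, ∀ i j, K i j = ∑ l, w l i * w l j)
    (hK' : PosK K') : PosK (fun i j => K i j * K' i j) := by
  obtain ⟨w, hw⟩ := hK
  intro v
  have h1 : ∀ i j, v i * v j * (K i j * K' i j)
      = ∑ l, (v i * w l i) * (v j * w l j) * K' i j := by
    intro i j
    rw [hw i j, Finset.sum_mul, Finset.mul_sum]
    refine Finset.sum_congr rfl fun l _ => by ring
  calc (0:ℝ) ≤ ∑ l, ∑ i, ∑ j, (v i * w l i) * (v j * w l j) * K' i j :=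
        Finset.sum_nonneg fun l _ => hK' (fun i => v i * w l i)
    _ = ∑ i, ∑ l, ∑ j, (v i * w l i) * (v j * w l j) * K' i j := Finset.sum_comm
    _ = ∑ i, ∑ j, ∑ l, (v i * w l i) * (v j * w l j) * K' i j :=
        Finset.sum_congr rfl fun i _ => Finset.sum_comm
    _ = ∑ i, ∑ j, v i * v j * (K i j * K' i j) :=
        Finset.sum_congr rfl fun i _ => Finset.sum_congr rfl fun j _ => (h1 i j).symm

lemma PosK.pow_of_decomp {K : ι → ι → ℝ}
    (hK : ∃ w : ι → ι → ℝ, ∀ i j, K i j = ∑ l, w l i * w l j) :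
    ∀ m : ℕ, PosK (fun i j => K i j ^ m) := by
  intro m
  induction m with
  | zero =>
      intro v
      have : ∑ i, ∑ j, v i * v j * K i j ^ 0 = (∑ i, v i) * (∑ j, v j) := by
        simp_rw [pow_zero, mul_one, ← Finset.mul_sum, ← Finset.sum_mul]
      rw [this]
      exact mul_self_nonneg _
  | succ m ih =>
      have := PosK.mul_of_decomp hK ih
      intro v
      have h2 := this v
      calc (0:ℝ) ≤ ∑ i, ∑ j, v i * v j * (K i j * K i j ^ m) := h2
        _ = ∑ i, ∑ j, v i * v j * K i j ^ (m+1) := by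
            refine Finset.sum_congr rfl fun i _ => Finset.sum_congr rfl fun j _ => ?_
            rw [← pow_succ']

lemma PosK.expK [DecidableEq ι] {K : ι → ι → ℝ} (hsymm : ∀ i j, K i j = K j i)
    (h : PosK K) : PosK (fun i j => Real.exp (K i j)) := by
  obtain ⟨w, hw⟩ := posK_decomp hsymm h
  intro v
  have hexp : ∀ x : ℝ, Real.exp x = ∑' m : ℕ, x ^ m / m.factorial := by
    intro x
    rw [Real.exp_eq_exp_ℝ, NormedSpace.exp_eq_tsum_div]
  have hsummable : ∀ (a : ℝ) (x : ℝ), Summable (fun m : ℕ => a * (x ^ m / m.factorial)) :=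
    fun a x => (Real.summable_pow_div_factorial x).mul_left a
  have step1 : ∀ i j : ι, v i * v j * Real.exp (K i j)
      = ∑' m : ℕ, v i * v j * (K i j ^ m / m.factorial) := by
    intro i j
    rw [hexp (K i j), ← tsum_mul_left]
  have key : ∑ i, ∑ j, v i * v j * Real.exp (K i j)
      = ∑' m : ℕ, ∑ i, ∑ j, v i * v j * (K i j ^ m / m.factorial) := by
    calc ∑ i, ∑ j, v i * v j * Real.exp (K i j)
        = ∑ i, ∑ j, ∑' m : ℕ, v i * v j * (K i j ^ m / m.factorial) :=
          Finset.sum_congr rfl fun i _ => Finset.sum_congr rfl fun j _ => step1 i j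
      _ = ∑ i, ∑' m : ℕ, ∑ j, v i * v j * (K i j ^ m / m.factorial) :=
          Finset.sum_congr rfl fun i _ => (Summable.tsum_finsetSum fun j _ => hsummable _ _).symm
      _ = ∑' m : ℕ, ∑ i, ∑ j, v i * v j * (K i j ^ m / m.factorial) :=
          (Summable.tsum_finsetSum fun i _ => summable_sum fun j _ => hsummable _ _).symm
  rw [key]
  refine tsum_nonneg fun m => ?_
  have hpow := PosK.pow_of_decomp ⟨w, hw⟩ m v
  have : ∑ i, ∑ j, v i * v j * (K i j ^ m / m.factorial)
      = (∑ i, ∑ j, v i * v j * K i j ^ m) / m.factorial := by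
    rw [Finset.sum_div]
    refine Finset.sum_congr rfl fun i _ => ?_
    rw [Finset.sum_div]
    refine Finset.sum_congr rfl fun j _ => by ring
  rw [this]
  exact div_nonneg hpow (by positivity)

end PosKernel
namespace Stmt5Aux

variable {Γ : Type*} [Group Γ]

/-- The linear functional on `ℝ[Γ]` given by pairing with a weight function `ψ`. -/
noncomputable def wt (ψ : Γ → ℝ) : MonoidAlgebra ℝ Γ →ₗ[ℝ] ℝ where
  toFun f := Finsupp.sum f.coeff fun x c => c * ψ x
  map_add' f g := Finsupp.sum_add_index' (fun a => zero_mul _) (fun a b₁ b₂ => add_mul _ _ _)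
  map_smul' r f := by
    show Finsupp.sum (r • f.coeff) (fun x c => c * ψ x) = r * Finsupp.sum f.coeff fun x c => c * ψ x
    have h1 : (Finsupp.sum (r • f.coeff) fun x c => c * ψ x)
        = Finsupp.sum f.coeff fun x c => (r * c) * ψ x :=
      Finsupp.sum_smul_index (fun a => zero_mul _)
    rw [h1, Finsupp.mul_sum]
    exact Finsupp.sum_congr fun x _ => by ring

lemma wt_apply (ψ : Γ → ℝ) (f : MonoidAlgebra ℝ Γ) :
    wt ψ f = ∑ x ∈ f.coeff.support, f.coeff x * ψ x := rfl

lemma wt_single (ψ : Γ → ℝ) (x : Γ) (c : ℝ) :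
    wt ψ (single x c) = c * ψ x := by
  show Finsupp.sum (Finsupp.single x c) (fun x c => c * ψ x) = c * ψ x
  exact Finsupp.sum_single_index (zero_mul _)

lemma astar_single (x : Γ) (c : ℝ) :
    astar (single x c : MonoidAlgebra ℝ Γ) = single x⁻¹ c :=
  congrArg MonoidAlgebra.ofCoeff (Finsupp.equivMapDomain_single _ _ _)

lemma astar_eq_domCongr (ξ : MonoidAlgebra ℝ Γ) :
    astar ξ = MonoidAlgebra.ofCoeff (Finsupp.domCongr (M := ℝ) (Equiv.inv Γ) ξ.coeff) := rfl

lemma astar_sum {ι : Type*} (s : Finset ι) (f : ι → MonoidAlgebra ℝ Γ) :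
    astar (∑ i ∈ s, f i) = ∑ i ∈ s, astar (f i) := by
  simp_rw [astar_eq_domCongr]
  simp_rw [MonoidAlgebra.coeff_sum, map_sum, MonoidAlgebra.ofCoeff_sum]

lemma astar_sub (a b : MonoidAlgebra ℝ Γ) : astar (a - b) = astar a - astar b := by
  simp_rw [astar_eq_domCongr]
  simp_rw [MonoidAlgebra.coeff_sub, map_sub, MonoidAlgebra.ofCoeff_sub]

lemma astar_one : astar (1 : MonoidAlgebra ℝ Γ) = 1 := by
  rw [MonoidAlgebra.one_def, astar_single, inv_one, ← MonoidAlgebra.one_def]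

lemma aug_single (x : Γ) (c : ℝ) : aug Γ (single x c) = c := by
  simp [aug]

lemma aug_apply' (f : MonoidAlgebra ℝ Γ) : aug Γ f = ∑ x ∈ f.coeff.support, f.coeff x := by
  rw [aug, MonoidAlgebra.lift_apply]
  simp [Finsupp.sum]

/-- The function `b(x) = φ(1 - x)`. -/
noncomputable def bfun (φ : ↥(augIdeal Γ) →ₗ[ℝ] ℝ) : Γ → ℝ :=
  fun x => φ ⟨1 - of ℝ Γ x, one_sub_of_mem_augIdeal x⟩

lemma bfun_one (φ : ↥(augIdeal Γ) →ₗ[ℝ] ℝ) : bfun φ 1 = 0 := by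
  have h : (⟨1 - of ℝ Γ 1, one_sub_of_mem_augIdeal 1⟩ : ↥(augIdeal Γ)) = 0 := by
    apply Subtype.ext
    simp [MonoidAlgebra.of_apply, MonoidAlgebra.one_def]
  rw [bfun, h, map_zero]

lemma bfun_inv (φ : ↥(augIdeal Γ) →ₗ[ℝ] ℝ)
    (hherm : ∀ ξ : ↥(augIdeal Γ),
      φ ⟨astar (ξ : MonoidAlgebra ℝ Γ), astar_mem_augIdeal ξ.2⟩ = φ ξ) (x : Γ) :
    bfun φ x⁻¹ = bfun φ x := by
  have h := hherm ⟨1 - of ℝ Γ x, one_sub_of_mem_augIdeal x⟩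
  have he : (⟨1 - of ℝ Γ x⁻¹, one_sub_of_mem_augIdeal x⁻¹⟩ : ↥(augIdeal Γ))
      = ⟨astar ((1:MonoidAlgebra ℝ Γ) - of ℝ Γ x),
          astar_mem_augIdeal (one_sub_of_mem_augIdeal x)⟩ := by
    apply Subtype.ext
    show (1:MonoidAlgebra ℝ Γ) - of ℝ Γ x⁻¹ = astar ((1:MonoidAlgebra ℝ Γ) - of ℝ Γ x)
    rw [astar_sub, astar_one, MonoidAlgebra.of_apply, MonoidAlgebra.of_apply, astar_single]
  show φ ⟨1 - of ℝ Γ x⁻¹, one_sub_of_mem_augIdeal x⁻¹⟩ = _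
  rw [he]
  exact h

lemma phi_eq (φ : ↥(augIdeal Γ) →ₗ[ℝ] ℝ) (ξ : ↥(augIdeal Γ)) :
    φ ξ = - wt (bfun φ) (ξ : MonoidAlgebra ℝ Γ) := by
  obtain ⟨f, hf⟩ := ξ
  have hsum0 : ∑ x ∈ f.coeff.support, f.coeff x = 0 := by rw [← aug_apply']; exact hf
  have hsingles : ∑ x ∈ f.coeff.support, (single x (f.coeff x) : MonoidAlgebra ℝ Γ) = f :=
    MonoidAlgebra.sum_coeff_single f
  have hterm : ∀ x : Γ,
      ((f.coeff x • (⟨1 - of ℝ Γ x, one_sub_of_mem_augIdeal x⟩ : ↥(augIdeal Γ))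
        : ↥(augIdeal Γ)) : MonoidAlgebra ℝ Γ)
      = f.coeff x • (1 : MonoidAlgebra ℝ Γ) - (single x (f.coeff x) : MonoidAlgebra ℝ Γ) := by
    intro x
    rw [SetLike.val_smul, smul_sub, MonoidAlgebra.of_apply,
      MonoidAlgebra.smul_single', mul_one]
  have hrepr : (⟨f, hf⟩ : ↥(augIdeal Γ))
      = - ∑ x ∈ f.coeff.support, f.coeff x • (⟨1 - of ℝ Γ x, one_sub_of_mem_augIdeal x⟩ : ↥(augIdeal Γ)) := by
    apply Subtype.ext
    rw [Submodule.coe_neg, Submodule.coe_sum]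
    rw [Finset.sum_congr rfl (fun x _ => hterm x), Finset.sum_sub_distrib,
      ← Finset.sum_smul, hsum0, zero_smul, hsingles, zero_sub, neg_neg]
  have lhs : φ ⟨f, hf⟩ = - ∑ x ∈ f.coeff.support, f.coeff x * bfun φ x := by
    rw [hrepr, map_neg, map_sum]
    congr 1
    exact Finset.sum_congr rfl fun x _ => by rw [map_smul, smul_eq_mul]; rfl
  show φ ⟨f, hf⟩ = - wt (bfun φ) f
  rw [lhs, wt_apply]

lemma wt_quadform (ψ : Γ → ℝ) {ι : Type*} [Fintype ι] (z : ι → Γ) (c : ι → ℝ) :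
    wt ψ (astar (∑ i, single (z i) (c i)) * ∑ j, single (z j) (c j))
      = ∑ i, ∑ j, c i * c j * ψ ((z i)⁻¹ * z j) := by
  rw [astar_sum]
  simp_rw [astar_single, Finset.sum_mul_sum, MonoidAlgebra.single_mul_single]
  rw [map_sum]
  refine Finset.sum_congr rfl fun i _ => ?_
  rw [map_sum]
  refine Finset.sum_congr rfl fun j _ => ?_
  rw [wt_single]

lemma cond_neg (φ : ↥(augIdeal Γ) →ₗ[ℝ] ℝ)
    (hpos : ∀ ξ : ↥(augIdeal Γ), (ξ : MonoidAlgebra ℝ Γ) ∈ SOSI Γ → 0 ≤ φ ξ)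
    {ι : Type*} [Fintype ι] (z : ι → Γ) (c : ι → ℝ) (hc : ∑ i, c i = 0) :
    ∑ i, ∑ j, c i * c j * bfun φ ((z i)⁻¹ * z j) ≤ 0 := by
  set g : MonoidAlgebra ℝ Γ := ∑ i, single (z i) (c i) with hg_def
  have hg : g ∈ augIdeal Γ := by
    show aug Γ g = 0
    rw [hg_def, map_sum]
    simp_rw [aug_single]
    exact hc
  have hmem : astar g * g ∈ augIdeal Γ := astar_mul_self_mem_augIdeal hg
  have hSOSI : astar g * g ∈ SOSI Γ := ⟨1, fun _ => g, fun _ => hg, by simp⟩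
  have h0 : 0 ≤ φ ⟨astar g * g, hmem⟩ := hpos _ hSOSI
  have h1 : φ ⟨astar g * g, hmem⟩ = - wt (bfun φ) (astar g * g) := phi_eq φ ⟨_, hmem⟩
  have h2 : wt (bfun φ) (astar g * g) = ∑ i, ∑ j, c i * c j * bfun φ ((z i)⁻¹ * z j) :=
    wt_quadform (bfun φ) z c
  linarith

/-- The conditionally negative definite function `N(x) = 2 φ(1-x)`. -/
noncomputable def nfun (φ : ↥(augIdeal Γ) →ₗ[ℝ] ℝ) : Γ → ℝ := fun x => 2 * bfun φ x

section Kernel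

variable (φ : ↥(augIdeal Γ) →ₗ[ℝ] ℝ)
  (hherm : ∀ ξ : ↥(augIdeal Γ),
      φ ⟨astar (ξ : MonoidAlgebra ℝ Γ), astar_mem_augIdeal ξ.2⟩ = φ ξ)
  (hpos : ∀ ξ : ↥(augIdeal Γ), (ξ : MonoidAlgebra ℝ Γ) ∈ SOSI Γ → 0 ≤ φ ξ)

include hherm in
lemma nfun_inv (x : Γ) : nfun φ x⁻¹ = nfun φ x := by
  rw [nfun, nfun, bfun_inv φ hherm]

include hherm hpos in
lemma kernel_pos {ι : Type*} [Fintype ι] (z : ι → Γ) :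
    PosK (fun i j => nfun φ (z i) + nfun φ (z j) - nfun φ ((z i)⁻¹ * z j)) := by
  intro v
  -- apply conditional negativity to the family extended by the identity element
  have hc : ∑ o : Option ι, (Option.elim o (-∑ i, v i) v) = 0 := by
    rw [Fintype.sum_option]
    simp
  have key := cond_neg φ hpos (fun o : Option ι => Option.elim o 1 z)
    (fun o => Option.elim o (-∑ i, v i) v) hc
  rw [Fintype.sum_option] at key
  rw [Fintype.sum_option] at key
  have krw : (∑ i, ∑ o : Option ι,
        (Option.elim (some i) (-∑ i, v i) v) * (Option.elim o (-∑ i, v i) v) *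
          bfun φ ((Option.elim (some i) 1 z)⁻¹ * Option.elim o 1 z))
      = ∑ i, ((v i * (-∑ i, v i) * bfun φ ((z i)⁻¹)) +
          ∑ j, v i * v j * bfun φ ((z i)⁻¹ * z j)) := by
    refine Finset.sum_congr rfl fun i _ => ?_
    rw [Fintype.sum_option]
    simp only [Option.elim]
    rw [mul_one]
  rw [krw] at key
  simp only [Option.elim, inv_one, one_mul, bfun_one, mul_zero, zero_add] at key
  rw [Finset.sum_add_distrib] at key
  -- name the basic quantities
  set s : ℝ := ∑ i, v i with hs
  set u : ℝ := ∑ i, v i * bfun φ (z i) with hu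
  set T : ℝ := ∑ i, ∑ j, v i * v j * bfun φ ((z i)⁻¹ * z j) with hT
  have e1 : ∑ o : ι, (-s) * v o * bfun φ (z o) = -s * u := by
    rw [hu, Finset.mul_sum]
    refine Finset.sum_congr rfl fun i _ => by ring
  have e2 : ∑ i, v i * (-s) * bfun φ ((z i)⁻¹) = -s * u := by
    rw [hu, Finset.mul_sum]
    refine Finset.sum_congr rfl fun i _ => ?_
    rw [bfun_inv φ hherm]
    ring
  rw [e1, e2] at key
  -- key : 0 + -s*u + (-s*u + T) ≤ 0, i.e. T ≤ 2 s u
  have hTs : T ≤ 2 * s * u := by linarith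
  -- now expand the goal
  have goal_eq : ∑ i, ∑ j, v i * v j *
        (nfun φ (z i) + nfun φ (z j) - nfun φ ((z i)⁻¹ * z j))
      = 2 * s * u + 2 * s * u - 2 * T := by
    have expand : ∀ i j, v i * v j *
          (nfun φ (z i) + nfun φ (z j) - nfun φ ((z i)⁻¹ * z j))
        = 2 * (v i * bfun φ (z i)) * v j + 2 * v i * (v j * bfun φ (z j))
          - 2 * (v i * v j * bfun φ ((z i)⁻¹ * z j)) := by
      intro i j
      simp only [nfun]
      ring
    rw [Finset.sum_congr rfl fun i _ => Finset.sum_congr rfl fun j _ => expand i j]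
    rw [Finset.sum_congr rfl fun i _ => Finset.sum_sub_distrib (s := Finset.univ) _ _]
    rw [Finset.sum_sub_distrib]
    rw [Finset.sum_congr rfl fun i _ => Finset.sum_add_distrib (s := Finset.univ)]
    rw [Finset.sum_add_distrib]
    congr 1
    · congr 1
      · calc ∑ x, ∑ y, 2 * (v x * bfun φ (z x)) * v y
            = ∑ x, (2 * (v x * bfun φ (z x))) * ∑ y, v y :=
              Finset.sum_congr rfl fun x _ => by rw [← Finset.mul_sum]
          _ = (∑ x, 2 * (v x * bfun φ (z x))) * ∑ y, v y := by rw [← Finset.sum_mul]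
          _ = (2 * ∑ i, v i) * ∑ i, v i * bfun φ (z i) := by
              rw [← Finset.mul_sum]; ring
      · calc ∑ x, ∑ y, 2 * v x * (v y * bfun φ (z y))
            = ∑ x, (2 * v x) * ∑ y, v y * bfun φ (z y) :=
              Finset.sum_congr rfl fun x _ => by rw [← Finset.mul_sum]
          _ = (∑ x, 2 * v x) * ∑ y, v y * bfun φ (z y) := by rw [← Finset.sum_mul]
          _ = (2 * ∑ i, v i) * ∑ i, v i * bfun φ (z i) := by
              rw [← Finset.mul_sum]
    · rw [hT, Finset.mul_sum]
      refine Finset.sum_congr rfl fun i _ => ?_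
      rw [Finset.mul_sum]
  calc (0:ℝ) ≤ 2 * s * u + 2 * s * u - 2 * T := by linarith
    _ = ∑ i, ∑ j, v i * v j *
        (nfun φ (z i) + nfun φ (z j) - nfun φ ((z i)⁻¹ * z j)) := goal_eq.symm

include hherm hpos in
lemma expker_pos {ι : Type*} [Fintype ι] [DecidableEq ι] (z : ι → Γ) {t : ℝ} (ht : 0 ≤ t) :
    PosK (fun i j => Real.exp (-t * nfun φ ((z i)⁻¹ * z j))) := by
  set K : ι → ι → ℝ :=
    fun i j => t * (nfun φ (z i) + nfun φ (z j) - nfun φ ((z i)⁻¹ * z j)) with hK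
  have hKsymm : ∀ i j, K i j = K j i := by
    intro i j
    rw [hK]
    simp only
    rw [show (z j)⁻¹ * z i = ((z i)⁻¹ * z j)⁻¹ by group]
    rw [nfun_inv φ hherm]
    ring
  have hKpos : PosK K := PosK.smulK (kernel_pos φ hherm hpos z) ht
  have hexpK : PosK (fun i j => Real.exp (K i j)) := PosK.expK hKsymm hKpos
  intro v
  have := hexpK (fun i => v i * Real.exp (-t * nfun φ (z i)))
  calc (0:ℝ) ≤ ∑ i, ∑ j, (v i * Real.exp (-t * nfun φ (z i)))
        * (v j * Real.exp (-t * nfun φ (z j))) * Real.exp (K i j) := this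
    _ = ∑ i, ∑ j, v i * v j * Real.exp (-t * nfun φ ((z i)⁻¹ * z j)) := by
      refine Finset.sum_congr rfl fun i _ => Finset.sum_congr rfl fun j _ => ?_
      rw [show -t * nfun φ ((z i)⁻¹ * z j)
          = (-t * nfun φ (z i)) + (-t * nfun φ (z j)) + K i j by rw [hK]; ring]
      rw [Real.exp_add, Real.exp_add]
      ring

include hherm hpos in
lemma wt_sq_nonneg {t : ℝ} (ht : 0 ≤ t) (g : MonoidAlgebra ℝ Γ) :
    0 ≤ wt (fun x => Real.exp (-t * nfun φ x)) (astar g * g) := by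
  classical
  have h0 : ∑ x ∈ g.coeff.support, (single x (g.coeff x) : MonoidAlgebra ℝ Γ) = g :=
    MonoidAlgebra.sum_coeff_single g
  have hg : g = ∑ i : {x // x ∈ g.coeff.support}, single (i : Γ) (g.coeff (i : Γ)) := by
    calc g = ∑ x ∈ g.coeff.support, (single x (g.coeff x) : MonoidAlgebra ℝ Γ) := h0.symm
      _ = ∑ i ∈ g.coeff.support.attach, (single (i : Γ) (g.coeff (i : Γ)) : MonoidAlgebra ℝ Γ) :=
          (Finset.sum_attach _ _).symm
      _ = ∑ i : {x // x ∈ g.coeff.support}, single (i : Γ) (g.coeff (i : Γ)) := by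
          rw [Finset.univ_eq_attach]
  rw [hg, wt_quadform]
  exact expker_pos φ hherm hpos (ι := {x // x ∈ g.coeff.support}) (fun i => (i : Γ)) ht (fun i => g.coeff (i : Γ))

end Kernel

lemma wt_astar (ψ : Γ → ℝ) (hψ : ∀ x, ψ x⁻¹ = ψ x) (ξ : MonoidAlgebra ℝ Γ) :
    wt ψ (astar ξ) = wt ψ ξ := by
  show Finsupp.sum (Finsupp.equivMapDomain (Equiv.inv Γ) ξ.coeff) (fun x c => c * ψ x)
    = Finsupp.sum ξ.coeff (fun x c => c * ψ x)
  rw [Finsupp.sum_equivMapDomain]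
  refine Finsupp.sum_congr fun x _ => ?_
  show ξ.coeff x * ψ ((Equiv.inv Γ) x) = ξ.coeff x * ψ x
  rw [show (Equiv.inv Γ) x = x⁻¹ from rfl, hψ]

lemma tendsto_exp_aux (c : ℝ) :
    Filter.Tendsto (fun n : ℕ => ((n : ℝ) + 1) * (Real.exp (-(1/((n:ℝ)+1)) * c) - 1))
      Filter.atTop (nhds (-c)) := by
  have hderiv : HasDerivAt (fun t : ℝ => Real.exp (-t * c)) (-c) 0 := by
    have h1 : HasDerivAt (fun t : ℝ => -t * c) (-c) 0 := by
      simpa using ((hasDerivAt_id (0:ℝ)).neg.mul_const c)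
    have h2 := h1.exp
    simpa using h2
  have hslope := hasDerivAt_iff_tendsto_slope.mp hderiv
  have htn : Filter.Tendsto (fun n : ℕ => 1/((n:ℝ)+1)) Filter.atTop
      (nhdsWithin 0 {(0:ℝ)}ᶜ) := by
    apply tendsto_nhdsWithin_of_tendsto_nhds_of_eventually_within
    · exact tendsto_one_div_add_atTop_nhds_zero_nat
    · refine Filter.Eventually.of_forall fun n => ?_
      have : (0:ℝ) < 1/((n:ℝ)+1) := by positivity
      exact Set.mem_compl_singleton_iff.mpr (ne_of_gt this)
  have hcomp := hslope.comp htn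
  refine hcomp.congr fun n => ?_
  show slope (fun t : ℝ => Real.exp (-t * c)) 0 (1/((n:ℝ)+1)) = _
  rw [slope_def_field]
  rw [neg_zero, zero_mul, Real.exp_zero, sub_zero, div_div_eq_mul_div, div_one]
  ring

end Stmt5Aux

/-- every positive linear functional on `I[Γ]` is a pointwise limit of
(restrictions of) positive linear functionals on `ℝ[Γ]`. -/
theorem stmt5 {Γ : Type*} [Group Γ]
    (φ : ↥(augIdeal Γ) →ₗ[ℝ] ℝ)
    (hherm : ∀ ξ : ↥(augIdeal Γ), φ ⟨astar (ξ : MonoidAlgebra ℝ Γ), astar_mem_augIdeal ξ.2⟩ = φ ξ)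
    (hpos : ∀ ξ : ↥(augIdeal Γ), (ξ : MonoidAlgebra ℝ Γ) ∈ SOSI Γ → 0 ≤ φ ξ) :
    ∃ φs : ℕ → (MonoidAlgebra ℝ Γ →ₗ[ℝ] ℝ),
      (∀ (n : ℕ) (ξ : MonoidAlgebra ℝ Γ), φs n (astar ξ) = φs n ξ) ∧
      (∀ (n : ℕ) (η : MonoidAlgebra ℝ Γ), η ∈ SOS Γ → 0 ≤ φs n η) ∧
      (∀ ξ : ↥(augIdeal Γ),
        Filter.Tendsto (fun n => φs n (ξ : MonoidAlgebra ℝ Γ)) Filter.atTop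
          (nhds (φ ξ))) := by
  classical
  set ψ : ℕ → Γ → ℝ :=
    fun n x => Real.exp (-(1/((n:ℝ)+1)) * Stmt5Aux.nfun φ x) with hψ_def
  refine ⟨fun n => (((n:ℝ)+1)/2) • Stmt5Aux.wt (ψ n), ?_, ?_, ?_⟩
  · -- hermitian
    intro n ξ
    show (((n:ℝ)+1)/2) • Stmt5Aux.wt (ψ n) (astar ξ) = (((n:ℝ)+1)/2) • Stmt5Aux.wt (ψ n) ξ
    rw [Stmt5Aux.wt_astar (ψ n) (fun x => by
        show Real.exp (-(1/((n:ℝ)+1)) * Stmt5Aux.nfun φ x⁻¹) = _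
        rw [Stmt5Aux.nfun_inv φ hherm])]
  · -- positive on SOS
    intro n η hη
    obtain ⟨m, f, hη⟩ := hη
    subst hη
    show (0:ℝ) ≤ (((n:ℝ)+1)/2) • Stmt5Aux.wt (ψ n) (∑ i, astar (f i) * f i)
    rw [map_sum, smul_eq_mul]
    refine mul_nonneg (by positivity) (Finset.sum_nonneg fun i _ => ?_)
    have ht : (0:ℝ) ≤ 1/((n:ℝ)+1) := by positivity
    exact Stmt5Aux.wt_sq_nonneg φ hherm hpos ht (f i)
  · -- convergence
    intro ξ
    have hphi : φ ξ = -∑ x ∈ (ξ : MonoidAlgebra ℝ Γ).coeff.support,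
        (ξ : MonoidAlgebra ℝ Γ).coeff x * Stmt5Aux.bfun φ x := by
      rw [Stmt5Aux.phi_eq φ ξ, Stmt5Aux.wt_apply]
    set f : MonoidAlgebra ℝ Γ := (ξ : MonoidAlgebra ℝ Γ) with hf_def
    have hsum0 : ∑ x ∈ f.coeff.support, f.coeff x = 0 := by
      rw [← Stmt5Aux.aug_apply']; exact ξ.2
    have hval : ∀ n : ℕ, (((n:ℝ)+1)/2) • Stmt5Aux.wt (ψ n) f
        = ∑ x ∈ f.coeff.support, (f.coeff x / 2) * (((n:ℝ)+1) * (ψ n x - 1)) := by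
      intro n
      have hexp : ∑ x ∈ f.coeff.support, (f.coeff x / 2) * (((n:ℝ)+1) * (ψ n x - 1))
          = (((n:ℝ)+1)/2) * (∑ x ∈ f.coeff.support, f.coeff x * ψ n x)
            - (((n:ℝ)+1)/2) * ∑ x ∈ f.coeff.support, f.coeff x := by
        rw [Finset.mul_sum, Finset.mul_sum, ← Finset.sum_sub_distrib]
        exact Finset.sum_congr rfl fun x _ => by ring
      rw [hexp, hsum0, mul_zero, sub_zero, smul_eq_mul, Stmt5Aux.wt_apply]
    have hterm : ∀ x ∈ f.coeff.support,
        Filter.Tendsto (fun n : ℕ => (f.coeff x / 2) * (((n:ℝ)+1) * (ψ n x - 1)))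
          Filter.atTop (nhds (-(f.coeff x * Stmt5Aux.bfun φ x))) := by
      intro x _
      have h1 := Stmt5Aux.tendsto_exp_aux (Stmt5Aux.nfun φ x)
      have h2 := h1.const_mul (f.coeff x / 2)
      have h3 : (f.coeff x / 2) * (-(Stmt5Aux.nfun φ x)) = -(f.coeff x * Stmt5Aux.bfun φ x) := by
        rw [Stmt5Aux.nfun]; ring
      rw [← h3]
      exact h2
    have hsumt := tendsto_finset_sum f.coeff.support hterm
    rw [hphi, ← Finset.sum_neg_distrib]
    exact hsumt.congr fun n => (hval n).symm
end

section
/- Let Γ be a finitely generated group, μ a finitely supported symmetric generating probability measure on Γ, and Δ_μ the associated Laplacian element. For every hermitian element ξ of the augmentation ideal I[Γ], the following are equivalent: (1) ξ + εΔ_μ ∈ Σ²I[Γ] for every ε > 0; (2) ξ + ε1 ∈ Σ²ℝ[Γ] for every ε > 0. (That is, the closure of Σ²I[Γ] equals I[Γ] ∩ closure(Σ²ℝ[Γ]).) -/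
open MonoidAlgebra Finset RealInnerProductSpace

section Basic
variable {Γ : Type*} [Group Γ]

lemma astar_apply (ξ : MonoidAlgebra ℝ Γ) (x : Γ) : (astar ξ).coeff x = ξ.coeff x⁻¹ := rfl

lemma astar_add (ξ η : MonoidAlgebra ℝ Γ) : astar (ξ + η) = astar ξ + astar η := by
  ext x; simp [astar_apply]

lemma astar_smul (c : ℝ) (ξ : MonoidAlgebra ℝ Γ) : astar (c • ξ) = c • astar ξ := by
  ext x; simp [astar_apply]

lemma astar_sub (ξ η : MonoidAlgebra ℝ Γ) : astar (ξ - η) = astar ξ - astar η := by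
  ext x; simp [astar_apply]

lemma astar_neg (ξ : MonoidAlgebra ℝ Γ) : astar (-ξ) = -astar ξ := by
  ext x; simp [astar_apply]

lemma astar_single (x : Γ) (c : ℝ) :
    astar (MonoidAlgebra.single x c) = MonoidAlgebra.single x⁻¹ c := by
  apply MonoidAlgebra.coeff_injective
  show Finsupp.equivMapDomain (Equiv.inv Γ) (Finsupp.single x c) = Finsupp.single x⁻¹ c
  rw [Finsupp.equivMapDomain_single]; rfl

lemma astar_one : astar (1 : MonoidAlgebra ℝ Γ) = 1 := by
  have : (1 : MonoidAlgebra ℝ Γ) = MonoidAlgebra.single 1 1 := rfl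
  rw [this, astar_single, inv_one]

lemma aug_single (x : Γ) (c : ℝ) : aug Γ (MonoidAlgebra.single x c) = c := by
  simp [aug, MonoidAlgebra.lift_single]

lemma aug_apply (η : MonoidAlgebra ℝ Γ) : aug Γ η = ∑ x ∈ η.coeff.support, η.coeff x := by
  conv_lhs => rw [← MonoidAlgebra.sum_coeff_single η]
  rw [map_finsuppSum]
  simp [aug_single, Finsupp.sum]

lemma mem_augIdeal_iff (η : MonoidAlgebra ℝ Γ) :
    η ∈ augIdeal Γ ↔ ∑ x ∈ η.coeff.support, η.coeff x = 0 := by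
  rw [augIdeal, LinearMap.mem_ker, ← aug_apply]; rfl

lemma aug_eq_zero_of_mem {η : MonoidAlgebra ℝ Γ} (h : η ∈ augIdeal Γ) : aug Γ η = 0 := h

/- Cone lemmas -/

lemma SOS_zero : (0 : MonoidAlgebra ℝ Γ) ∈ SOS Γ := ⟨0, fun i => 0, by simp⟩

lemma SOSI_zero : (0 : MonoidAlgebra ℝ Γ) ∈ SOSI Γ :=
  ⟨0, fun i => 0, fun i => i.elim0, by simp⟩

lemma SOS_add {a b : MonoidAlgebra ℝ Γ} (ha : a ∈ SOS Γ) (hb : b ∈ SOS Γ) :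
    a + b ∈ SOS Γ := by
  obtain ⟨n, f, rfl⟩ := ha
  obtain ⟨m, g, rfl⟩ := hb
  refine ⟨n + m, Fin.append f g, ?_⟩
  rw [Fin.sum_univ_add]
  simp [Fin.append_left, Fin.append_right]

lemma SOSI_add {a b : MonoidAlgebra ℝ Γ} (ha : a ∈ SOSI Γ) (hb : b ∈ SOSI Γ) :
    a + b ∈ SOSI Γ := by
  obtain ⟨n, f, hf, rfl⟩ := ha
  obtain ⟨m, g, hg, rfl⟩ := hb
  refine ⟨n + m, Fin.append f g, ?_, ?_⟩
  · intro i
    refine Fin.addCases (fun j => ?_) (fun j => ?_) i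
    · rw [Fin.append_left]; exact hf j
    · rw [Fin.append_right]; exact hg j
  · rw [Fin.sum_univ_add]
    simp [Fin.append_left, Fin.append_right]

lemma SOS_smul {a : MonoidAlgebra ℝ Γ} (ha : a ∈ SOS Γ) {c : ℝ} (hc : 0 ≤ c) :
    c • a ∈ SOS Γ := by
  obtain ⟨n, f, rfl⟩ := ha
  refine ⟨n, fun i => Real.sqrt c • f i, ?_⟩
  rw [Finset.smul_sum]
  refine Finset.sum_congr rfl fun i _ => ?_
  rw [astar_smul, smul_mul_assoc, mul_smul_comm, smul_smul, Real.mul_self_sqrt hc]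

lemma SOSI_smul {a : MonoidAlgebra ℝ Γ} (ha : a ∈ SOSI Γ) {c : ℝ} (hc : 0 ≤ c) :
    c • a ∈ SOSI Γ := by
  obtain ⟨n, f, hf, rfl⟩ := ha
  refine ⟨n, fun i => Real.sqrt c • f i, fun i => Submodule.smul_mem _ _ (hf i), ?_⟩
  rw [Finset.smul_sum]
  refine Finset.sum_congr rfl fun i _ => ?_
  rw [astar_smul, smul_mul_assoc, mul_smul_comm, smul_smul, Real.mul_self_sqrt hc]

lemma SOSI_sum {ι : Type*} (s : Finset ι) (F : ι → MonoidAlgebra ℝ Γ)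
    (h : ∀ i ∈ s, F i ∈ SOSI Γ) : ∑ i ∈ s, F i ∈ SOSI Γ := by
  classical
  induction s using Finset.induction_on with
  | empty => simpa using SOSI_zero
  | insert _ _ hx ih =>
    rw [Finset.sum_insert hx]
    exact SOSI_add (h _ (Finset.mem_insert_self _ _))
      (ih fun i hi => h i (Finset.mem_insert_of_mem hi))

lemma SOS_sum {ι : Type*} (s : Finset ι) (F : ι → MonoidAlgebra ℝ Γ)
    (h : ∀ i ∈ s, F i ∈ SOS Γ) : ∑ i ∈ s, F i ∈ SOS Γ := by
  classical
  induction s using Finset.induction_on with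
  | empty => simpa using SOS_zero
  | insert _ _ hx ih =>
    rw [Finset.sum_insert hx]
    exact SOS_add (h _ (Finset.mem_insert_self _ _))
      (ih fun i hi => h i (Finset.mem_insert_of_mem hi))

lemma SOSI_subset_SOS : SOSI Γ ⊆ SOS Γ := fun a ⟨n, f, _, h⟩ => ⟨n, f, h⟩

lemma SOSI_square {ζ : MonoidAlgebra ℝ Γ} (hζ : ζ ∈ augIdeal Γ) :
    astar ζ * ζ ∈ SOSI Γ :=
  ⟨1, fun _ => ζ, fun _ => hζ, by simp⟩

lemma SOS_square (ζ : MonoidAlgebra ℝ Γ) : astar ζ * ζ ∈ SOS Γ :=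
  ⟨1, fun _ => ζ, by simp⟩

end Basic
section Sq
variable {Γ : Type*} [Group Γ]

/-- `astar` as a linear map. -/
def astarL (Γ : Type*) [Group Γ] : MonoidAlgebra ℝ Γ →ₗ[ℝ] MonoidAlgebra ℝ Γ where
  toFun := astar
  map_add' := astar_add
  map_smul' := astar_smul

lemma astarL_apply (ξ : MonoidAlgebra ℝ Γ) : astarL Γ ξ = astar ξ := rfl

lemma mem_augIdeal (η : MonoidAlgebra ℝ Γ) : η ∈ augIdeal Γ ↔ aug Γ η = 0 :=
  LinearMap.mem_ker

/-- The element `(1-x)*(1-x) = 2 - x - x⁻¹`. -/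
noncomputable def lsq (x : Γ) : MonoidAlgebra ℝ Γ :=
  (2 : MonoidAlgebra ℝ Γ) - single x 1 - single x⁻¹ 1

lemma one_sub_single_mem (x : Γ) : (1 : MonoidAlgebra ℝ Γ) - single x 1 ∈ augIdeal Γ := by
  rw [mem_augIdeal, map_sub, map_one, aug_single, sub_self]

lemma sq_eq (x : Γ) :
    lsq x = astar ((1 : MonoidAlgebra ℝ Γ) - single x 1) * ((1 : MonoidAlgebra ℝ Γ) - single x 1) := by
  rw [astar_sub, astar_one, astar_single, sub_mul, mul_sub, mul_sub, one_mul, one_mul,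
    MonoidAlgebra.single_mul_single, inv_mul_cancel, mul_one]
  have h2 : (2 : MonoidAlgebra ℝ Γ) = single 1 1 + single 1 1 := by
    rw [← MonoidAlgebra.one_def]; norm_num
  rw [lsq, MonoidAlgebra.one_def, h2]
  norm_num
  abel

lemma sq_mem_SOSI (x : Γ) : lsq x ∈ SOSI Γ := by
  rw [sq_eq]; exact SOSI_square (one_sub_single_mem x)

lemma sq_one : lsq (1 : Γ) = 0 := by
  have h2 : (2 : MonoidAlgebra ℝ Γ) = single 1 1 + single 1 1 := by
    rw [← MonoidAlgebra.one_def]; norm_num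
  rw [lsq, inv_one, h2]
  abel

lemma sq_inv (x : Γ) : lsq x⁻¹ = lsq x := by
  rw [lsq, lsq, inv_inv]; abel

lemma astar_sq (x : Γ) : astar (lsq x) = lsq x := by
  rw [lsq, astar_sub, astar_sub, astar_single, astar_single, inv_inv]
  have : astar (2 : MonoidAlgebra ℝ Γ) = 2 := by
    have h2 : (2 : MonoidAlgebra ℝ Γ) = 1 + 1 := by norm_num
    rw [h2, astar_add, astar_one]
  rw [this]; abel

lemma aug_sq (x : Γ) : aug Γ (lsq x) = 0 := by
  have h2 : aug Γ (2 : MonoidAlgebra ℝ Γ) = 2 := by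
    have : (2 : MonoidAlgebra ℝ Γ) = 1 + 1 := by norm_num
    rw [this, map_add, map_one]; norm_num
  rw [lsq, map_sub, map_sub, h2, aug_single, aug_single]; norm_num

lemma sq_mem_augIdeal (x : Γ) : lsq x ∈ augIdeal Γ := by
  rw [mem_augIdeal]; exact aug_sq x

/-- Expansion of `η` into singles. -/
lemma sum_smul_single (η : MonoidAlgebra ℝ Γ) :
    ∑ x ∈ η.coeff.support, η.coeff x • (single x 1 : MonoidAlgebra ℝ Γ) = η := by
  conv_rhs => rw [← MonoidAlgebra.sum_coeff_single η]
  rw [Finsupp.sum]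
  refine Finset.sum_congr rfl fun x _ => ?_
  rw [MonoidAlgebra.smul_single]
  simp

lemma sum_smul_single_inv (η : MonoidAlgebra ℝ Γ) :
    ∑ x ∈ η.coeff.support, η.coeff x • (single x⁻¹ 1 : MonoidAlgebra ℝ Γ) = astar η := by
  have h := congrArg (astarL Γ) (sum_smul_single η)
  rw [map_sum] at h
  rw [← astarL_apply, ← h]
  refine Finset.sum_congr rfl fun x _ => ?_
  rw [astarL_apply, astar_smul, astar_single]

/-- The key expansion: `∑_x η(x) lsq(x) = 2 aug(η) - η - η*`. -/
lemma sum_smul_sq (η : MonoidAlgebra ℝ Γ) :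
    ∑ x ∈ η.coeff.support, η.coeff x • lsq x
      = (2 * aug Γ η) • (1 : MonoidAlgebra ℝ Γ) - η - astar η := by
  have h1 : ∑ x ∈ η.coeff.support, η.coeff x • (2 : MonoidAlgebra ℝ Γ)
      = (2 * aug Γ η) • (1 : MonoidAlgebra ℝ Γ) := by
    rw [← Finset.sum_smul, aug_apply]
    rw [mul_comm, mul_smul]
    norm_num [two_smul]
  calc ∑ x ∈ η.coeff.support, η.coeff x • lsq x
      = ∑ x ∈ η.coeff.support, (η.coeff x • (2 : MonoidAlgebra ℝ Γ)
          - η.coeff x • (single x 1 : MonoidAlgebra ℝ Γ) - η.coeff x • (single x⁻¹ 1 : MonoidAlgebra ℝ Γ)) := by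
        refine Finset.sum_congr rfl fun x _ => ?_
        rw [lsq, smul_sub, smul_sub]
    _ = (2 * aug Γ η) • (1 : MonoidAlgebra ℝ Γ) - η - astar η := by
        rw [Finset.sum_sub_distrib, Finset.sum_sub_distrib, h1, sum_smul_single,
          sum_smul_single_inv]

end Sq
section OrderUnit
variable {Γ : Type*} [Group Γ]

lemma parallelogram (a b : MonoidAlgebra ℝ Γ) :
    astar (a + b) * (a + b) + astar (a - b) * (a - b)
      = astar a * a + astar a * a + (astar b * b + astar b * b) := by
  rw [astar_add, astar_sub]; noncomm_ring

/-- `(1+x)*(1+x) = 2 + x + x⁻¹` is a hermitian square. -/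
lemma sqp_SOS (x : Γ) :
    (2 : MonoidAlgebra ℝ Γ) + single x 1 + single x⁻¹ 1 ∈ SOS Γ := by
  have : (2 : MonoidAlgebra ℝ Γ) + single x 1 + single x⁻¹ 1
      = astar ((1 : MonoidAlgebra ℝ Γ) + single x 1) * ((1 : MonoidAlgebra ℝ Γ) + single x 1) := by
    rw [astar_add, astar_one, astar_single, add_mul, mul_add, mul_add, one_mul, one_mul,
      MonoidAlgebra.single_mul_single, inv_mul_cancel, mul_one]
    have h2 : (2 : MonoidAlgebra ℝ Γ) = single 1 1 + single 1 1 := by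
      rw [← MonoidAlgebra.one_def]; norm_num
    rw [MonoidAlgebra.one_def, h2]
    norm_num
    abel
  rw [this]; exact SOS_square _

lemma sum_smul_sqp (η : MonoidAlgebra ℝ Γ) :
    ∑ x ∈ η.coeff.support, η.coeff x • ((2 : MonoidAlgebra ℝ Γ) + single x 1 + single x⁻¹ 1)
      = (2 * aug Γ η) • (1 : MonoidAlgebra ℝ Γ) + η + astar η := by
  have h1 : ∑ x ∈ η.coeff.support, η.coeff x • (2 : MonoidAlgebra ℝ Γ)
      = (2 * aug Γ η) • (1 : MonoidAlgebra ℝ Γ) := by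
    rw [← Finset.sum_smul, aug_apply, mul_comm, mul_smul]
    norm_num [two_smul]
  calc ∑ x ∈ η.coeff.support, η.coeff x • ((2 : MonoidAlgebra ℝ Γ) + single x 1 + single x⁻¹ 1)
      = ∑ x ∈ η.coeff.support, (η.coeff x • (2 : MonoidAlgebra ℝ Γ)
          + η.coeff x • (single x 1 : MonoidAlgebra ℝ Γ) + η.coeff x • (single x⁻¹ 1 : MonoidAlgebra ℝ Γ)) := by
        refine Finset.sum_congr rfl fun x _ => ?_
        rw [smul_add, smul_add]
    _ = (2 * aug Γ η) • (1 : MonoidAlgebra ℝ Γ) + η + astar η := by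
        rw [Finset.sum_add_distrib, Finset.sum_add_distrib, h1, sum_smul_single,
          sum_smul_single_inv]

variable (μ : MonoidAlgebra ℝ Γ)

lemma astar_mu (hsymm : ∀ x : Γ, μ.coeff x⁻¹ = μ.coeff x) : astar μ = μ := by
  ext x; rw [astar_apply, hsymm]

lemma aug_mu (hprob : ∑ x ∈ μ.coeff.support, μ.coeff x = 1) : aug Γ μ = 1 := by rw [aug_apply]; exact hprob

lemma two_delta (hsymm : ∀ x : Γ, μ.coeff x⁻¹ = μ.coeff x) (hprob : ∑ x ∈ μ.coeff.support, μ.coeff x = 1) : ∑ x ∈ μ.coeff.support, μ.coeff x • lsq x = (2 : ℝ) • ((1 : MonoidAlgebra ℝ Γ) - μ) := by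
  rw [sum_smul_sq, aug_mu μ hprob, astar_mu μ hsymm, mul_one, smul_sub, two_smul, two_smul]
  abel

lemma two_oneplus (hsymm : ∀ x : Γ, μ.coeff x⁻¹ = μ.coeff x) (hprob : ∑ x ∈ μ.coeff.support, μ.coeff x = 1) : ∑ x ∈ μ.coeff.support, μ.coeff x • ((2 : MonoidAlgebra ℝ Γ) + single x 1 + single x⁻¹ 1)
    = (2 : ℝ) • ((1 : MonoidAlgebra ℝ Γ) + μ) := by
  rw [sum_smul_sqp, aug_mu μ hprob, astar_mu μ hsymm, mul_one, smul_add, two_smul, two_smul]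
  abel

lemma delta_SOSI (hpos : ∀ x : Γ, 0 ≤ μ.coeff x) (hsymm : ∀ x : Γ, μ.coeff x⁻¹ = μ.coeff x) (hprob : ∑ x ∈ μ.coeff.support, μ.coeff x = 1) : (1 : MonoidAlgebra ℝ Γ) - μ ∈ SOSI Γ := by
  have h := two_delta μ hsymm hprob
  have : (1 : MonoidAlgebra ℝ Γ) - μ = (2⁻¹ : ℝ) • ∑ x ∈ μ.coeff.support, μ.coeff x • lsq x := by
    rw [h, smul_smul]; norm_num
  rw [this]
  exact SOSI_smul (SOSI_sum _ _ fun x _ => SOSI_smul (sq_mem_SOSI x) (hpos x)) (by norm_num)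

lemma oneplus_SOS (hpos : ∀ x : Γ, 0 ≤ μ.coeff x) (hsymm : ∀ x : Γ, μ.coeff x⁻¹ = μ.coeff x) (hprob : ∑ x ∈ μ.coeff.support, μ.coeff x = 1) : (1 : MonoidAlgebra ℝ Γ) + μ ∈ SOS Γ := by
  have h := two_oneplus μ hsymm hprob
  have : (1 : MonoidAlgebra ℝ Γ) + μ = (2⁻¹ : ℝ) • ∑ x ∈ μ.coeff.support,
      μ.coeff x • ((2 : MonoidAlgebra ℝ Γ) + single x 1 + single x⁻¹ 1) := by
    rw [h, smul_smul]; norm_num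
  rw [this]
  exact SOS_smul (SOS_sum _ _ fun x _ => SOS_smul (sqp_SOS x) (hpos x)) (by norm_num)

/-- Order unit lemma for group elements. -/
lemma exists_K (hpos : ∀ x : Γ, 0 ≤ μ.coeff x) (hsymm : ∀ x : Γ, μ.coeff x⁻¹ = μ.coeff x) (hprob : ∑ x ∈ μ.coeff.support, μ.coeff x = 1) (hgen : Subgroup.closure ((μ.coeff.support : Set Γ)) = ⊤) (x : Γ) :
    ∃ K : ℝ, 0 ≤ K ∧ K • ((1 : MonoidAlgebra ℝ Γ) - μ) - lsq x ∈ SOSI Γ := by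
  classical
  have hx : x ∈ Subgroup.closure ((μ.coeff.support : Set Γ)) := by rw [hgen]; trivial
  induction hx using Subgroup.closure_induction with
  | mem s hs =>
    have hs' : s ∈ μ.coeff.support := hs
    have hμs : 0 < μ.coeff s := lt_of_le_of_ne (hpos s) (Ne.symm (Finsupp.mem_support_iff.mp hs'))
    refine ⟨2 / μ.coeff s, by positivity, ?_⟩
    have key : (2 / μ.coeff s) • ((1 : MonoidAlgebra ℝ Γ) - μ)
        = ∑ t ∈ μ.coeff.support, (μ.coeff t / μ.coeff s) • lsq t := by
      have := two_delta μ hsymm hprob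
      rw [div_eq_mul_inv, mul_comm, mul_smul, ← this, Finset.smul_sum]
      refine Finset.sum_congr rfl fun t _ => ?_
      rw [smul_smul, div_eq_mul_inv, mul_comm]
    rw [key, ← Finset.add_sum_erase _ _ hs', div_self (ne_of_gt hμs), one_smul,
      add_sub_cancel_left]
    exact SOSI_sum _ _ fun t _ => SOSI_smul (sq_mem_SOSI t) (div_nonneg (hpos t) hμs.le)
  | one =>
    exact ⟨0, le_refl _, by rw [zero_smul, sq_one, sub_zero]; exact SOSI_zero⟩
  | mul a b ha hb iha ihb =>
    obtain ⟨Ka, hKa, hA⟩ := iha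
    obtain ⟨Kb, hKb, hB⟩ := ihb
    refine ⟨2 * Ka + 2 * Kb, by positivity, ?_⟩
    -- lsq (a*b) = lsq a + lsq a + (lsq b + lsq b) - astar (u - v) * (u - v)
    set u : MonoidAlgebra ℝ Γ := 1 - single a 1 with hu
    set v : MonoidAlgebra ℝ Γ := single a 1 - single (a * b) 1 with hv
    have huv : u + v = 1 - single (a * b) 1 := by rw [hu, hv]; abel
    have hAu : astar u * u = lsq a := (sq_eq a).symm
    have hBv : astar v * v = lsq b := by
      rw [hv, astar_sub, astar_single, astar_single, sub_mul, mul_sub, mul_sub,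
        MonoidAlgebra.single_mul_single, MonoidAlgebra.single_mul_single,
        MonoidAlgebra.single_mul_single, MonoidAlgebra.single_mul_single,
        inv_mul_cancel, mul_inv_rev, mul_one]
      have h1 : a⁻¹ * (a * b) = b := by group
      have h2 : b⁻¹ * a⁻¹ * a = b⁻¹ := by group
      have h3 : b⁻¹ * a⁻¹ * (a * b) = 1 := by group
      rw [h1, h2, h3, lsq, ← MonoidAlgebra.one_def]
      have h2' : (2 : MonoidAlgebra ℝ Γ) = 1 + 1 := by norm_num
      rw [h2']; abel
    have hsum : lsq (a * b) = lsq a + lsq a + (lsq b + lsq b) - astar (u - v) * (u - v) := by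
      have hp := parallelogram u v
      rw [huv, hAu, hBv] at hp
      rw [sq_eq (a * b), ← hp]; abel
    have hmem : astar (u - v) * (u - v) ∈ SOSI Γ := by
      refine SOSI_square ?_
      have h1 : u ∈ augIdeal Γ := one_sub_single_mem a
      have h2 : v ∈ augIdeal Γ := by
        rw [mem_augIdeal, hv, map_sub, aug_single, aug_single, sub_self]
      exact Submodule.sub_mem _ h1 h2
    have : (2 * Ka + 2 * Kb) • ((1 : MonoidAlgebra ℝ Γ) - μ) - lsq (a * b)
        = (Ka • ((1 : MonoidAlgebra ℝ Γ) - μ) - lsq a)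
          + (Ka • ((1 : MonoidAlgebra ℝ Γ) - μ) - lsq a)
          + ((Kb • ((1 : MonoidAlgebra ℝ Γ) - μ) - lsq b)
            + (Kb • ((1 : MonoidAlgebra ℝ Γ) - μ) - lsq b))
          + astar (u - v) * (u - v) := by
      rw [hsum]
      have : (2 * Ka + 2 * Kb) • ((1 : MonoidAlgebra ℝ Γ) - μ)
          = Ka • ((1 : MonoidAlgebra ℝ Γ) - μ) + Ka • ((1 : MonoidAlgebra ℝ Γ) - μ)
            + (Kb • ((1 : MonoidAlgebra ℝ Γ) - μ) + Kb • ((1 : MonoidAlgebra ℝ Γ) - μ)) := by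
        rw [← two_smul ℝ (Ka • _), ← two_smul ℝ (Kb • _), smul_smul, smul_smul, ← add_smul]
      rw [this]; abel
    rw [this]
    exact SOSI_add (SOSI_add (SOSI_add hA hA) (SOSI_add hB hB)) hmem
  | inv a ha iha =>
    obtain ⟨K, hK, h⟩ := iha
    exact ⟨K, hK, by rwa [sq_inv]⟩

/-- Order unit lemma for hermitian elements of the augmentation ideal. -/
lemma exists_R (hpos : ∀ x : Γ, 0 ≤ μ.coeff x) (hsymm : ∀ x : Γ, μ.coeff x⁻¹ = μ.coeff x) (hprob : ∑ x ∈ μ.coeff.support, μ.coeff x = 1) (hgen : Subgroup.closure ((μ.coeff.support : Set Γ)) = ⊤)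
    (θ : MonoidAlgebra ℝ Γ) (hθI : θ ∈ augIdeal Γ) (hθh : astar θ = θ) :
    ∃ R : ℝ, 0 ≤ R ∧ R • ((1 : MonoidAlgebra ℝ Γ) - μ) - θ ∈ SOSI Γ := by
  choose K hK0 hKm using exists_K μ hpos hsymm hprob hgen
  have hexp : ∑ x ∈ θ.coeff.support, θ.coeff x • lsq x = -((2:ℝ) • θ) := by
    rw [sum_smul_sq, aug_eq_zero_of_mem hθI, hθh, mul_zero, zero_smul, two_smul]
    abel
  refine ⟨∑ x ∈ θ.coeff.support, |θ.coeff x| / 2 * K x,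
    Finset.sum_nonneg fun x _ => mul_nonneg (by positivity) (hK0 x), ?_⟩
  have hsplit : (∑ x ∈ θ.coeff.support, |θ.coeff x| / 2 * K x) • ((1 : MonoidAlgebra ℝ Γ) - μ) - θ
      = ∑ x ∈ θ.coeff.support,
        ((|θ.coeff x| / 2 * K x) • ((1 : MonoidAlgebra ℝ Γ) - μ) + (θ.coeff x / 2) • lsq x) := by
    rw [Finset.sum_add_distrib, ← Finset.sum_smul]
    have h2 : ∑ x ∈ θ.coeff.support, (θ.coeff x / 2) • lsq x = -θ := by
      calc ∑ x ∈ θ.coeff.support, (θ.coeff x / 2) • lsq x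
          = (2⁻¹ : ℝ) • ∑ x ∈ θ.coeff.support, θ.coeff x • lsq x := by
            rw [Finset.smul_sum]
            refine Finset.sum_congr rfl fun x _ => ?_
            rw [smul_smul, div_eq_mul_inv, mul_comm]
        _ = -θ := by rw [hexp, smul_neg, smul_smul]; norm_num
    rw [h2]
    abel
  rw [hsplit]
  refine SOSI_sum _ _ fun x _ => ?_
  rcases le_or_gt 0 (θ.coeff x) with hx | hx
  · have : (|θ.coeff x| / 2 * K x) • ((1 : MonoidAlgebra ℝ Γ) - μ) + (θ.coeff x / 2) • lsq x
        = (θ.coeff x / 2) • (K x • ((1 : MonoidAlgebra ℝ Γ) - μ) + lsq x) := by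
      rw [abs_of_nonneg hx]
      module
    rw [this]
    refine SOSI_smul (SOSI_add ?_ (sq_mem_SOSI x)) (by positivity)
    have : K x • ((1 : MonoidAlgebra ℝ Γ) - μ)
        = (K x • ((1 : MonoidAlgebra ℝ Γ) - μ) - lsq x) + lsq x := by abel
    rw [this]
    exact SOSI_add (hKm x) (sq_mem_SOSI x)
  · have : (|θ.coeff x| / 2 * K x) • ((1 : MonoidAlgebra ℝ Γ) - μ) + (θ.coeff x / 2) • lsq x
        = (-θ.coeff x / 2) • (K x • ((1 : MonoidAlgebra ℝ Γ) - μ) - lsq x) := by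
      rw [abs_of_neg hx]
      module
    rw [this]
    exact SOSI_smul (hKm x) (by linarith)

end OrderUnit
section ExpPSD

lemma pow_sum_expand {m : ℕ} (w : Fin m → ℝ) (k : ℕ) :
    (∑ p, w p) ^ k = ∑ g : Fin k → Fin m, ∏ r, w (g r) := by
  have h1 : (∑ p, w p) ^ k = ∏ _r : Fin k, (∑ p, w p) := by
    rw [Finset.prod_const, Finset.card_univ, Fintype.card_fin]
  rw [h1, Finset.prod_univ_sum]
  rw [← Fintype.piFinset_univ]

lemma sq_sum_pow_nonneg {n m : ℕ} (B : Fin m → Fin n → ℝ) (c : Fin n → ℝ) (k : ℕ) :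
    0 ≤ ∑ i, ∑ j, c i * c j * (∑ p, B p i * B p j) ^ k := by
  have key : ∑ i, ∑ j, c i * c j * (∑ p, B p i * B p j) ^ k
      = ∑ g : Fin k → Fin m, (∑ i, c i * ∏ r, B (g r) i) ^ 2 := by
    have h1 : ∀ i j : Fin n, c i * c j * (∑ p, B p i * B p j) ^ k
        = ∑ g : Fin k → Fin m, (c i * ∏ r, B (g r) i) * (c j * ∏ r, B (g r) j) := by
      intro i j
      rw [pow_sum_expand (fun p => B p i * B p j) k, Finset.mul_sum]
      refine Finset.sum_congr rfl fun g _ => ?_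
      rw [Finset.prod_mul_distrib]
      ring
    calc ∑ i, ∑ j, c i * c j * (∑ p, B p i * B p j) ^ k
        = ∑ i, ∑ j, ∑ g : Fin k → Fin m,
            (c i * ∏ r, B (g r) i) * (c j * ∏ r, B (g r) j) := by
          exact Finset.sum_congr rfl fun i _ => Finset.sum_congr rfl fun j _ => h1 i j
      _ = ∑ i, ∑ g : Fin k → Fin m, ∑ j,
            (c i * ∏ r, B (g r) i) * (c j * ∏ r, B (g r) j) :=
          Finset.sum_congr rfl fun i _ => Finset.sum_comm
      _ = ∑ g : Fin k → Fin m, ∑ i, ∑ j,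
            (c i * ∏ r, B (g r) i) * (c j * ∏ r, B (g r) j) := Finset.sum_comm
      _ = ∑ g : Fin k → Fin m, (∑ i, c i * ∏ r, B (g r) i) ^ 2 := by
          refine Finset.sum_congr rfl fun g _ => ?_
          rw [sq, Finset.sum_mul_sum]
  rw [key]
  exact Finset.sum_nonneg fun g _ => sq_nonneg _

/-- Entrywise exponential of a positive semidefinite real matrix is positive semidefinite. -/
lemma entrywise_exp_psd {n : ℕ} (A : Matrix (Fin n) (Fin n) ℝ) (hA : A.PosSemidef)
    (c : Fin n → ℝ) : 0 ≤ ∑ i, ∑ j, c i * c j * Real.exp (A i j) := by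
  obtain ⟨m, B, hB⟩ := Matrix.posSemidef_iff_eq_sum_vecMulVec.mp hA
  have hentry : ∀ i j, A i j = ∑ p, B p i * B p j := by
    intro i j
    rw [hB, Matrix.sum_apply]
    refine Finset.sum_congr rfl fun p _ => ?_
    simp [Matrix.vecMulVec_apply]
  have hsummable : ∀ i j : Fin n, Summable (fun k : ℕ => c i * c j * ((A i j) ^ k / (Nat.factorial k : ℝ))) :=
    fun i j => (Real.summable_pow_div_factorial (A i j)).mul_left _
  have hexp : ∀ i j, c i * c j * Real.exp (A i j)
      = ∑' k : ℕ, c i * c j * ((A i j) ^ k / (Nat.factorial k : ℝ)) := by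
    intro i j
    rw [Real.exp_eq_exp_ℝ, NormedSpace.exp_eq_tsum_div, tsum_mul_left]
  have step1 : ∀ i : Fin n, ∑ j, ∑' k : ℕ, c i * c j * ((A i j) ^ k / (Nat.factorial k : ℝ))
      = ∑' k : ℕ, ∑ j, c i * c j * ((A i j) ^ k / (Nat.factorial k : ℝ)) :=
    fun i => (Summable.tsum_finsetSum (fun j _ => hsummable i j)).symm
  have step2 : ∑ i, ∑' k : ℕ, ∑ j, c i * c j * ((A i j) ^ k / (Nat.factorial k : ℝ))
      = ∑' k : ℕ, ∑ i, ∑ j, c i * c j * ((A i j) ^ k / (Nat.factorial k : ℝ)) :=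
    (Summable.tsum_finsetSum (fun i _ => summable_sum (fun j _ => hsummable i j))).symm
  have hswap : ∑ i, ∑ j, c i * c j * Real.exp (A i j)
      = ∑' k : ℕ, ∑ i, ∑ j, c i * c j * ((A i j) ^ k / (Nat.factorial k : ℝ)) := by
    simp_rw [hexp, step1]
    exact step2
  rw [hswap]
  refine tsum_nonneg fun k => ?_
  have : ∑ i, ∑ j, c i * c j * ((A i j) ^ k / (Nat.factorial k : ℝ))
      = (∑ i, ∑ j, c i * c j * (A i j) ^ k) / (Nat.factorial k : ℝ) := by
    rw [Finset.sum_div]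
    refine Finset.sum_congr rfl fun i _ => ?_
    rw [Finset.sum_div]
    refine Finset.sum_congr rfl fun j _ => ?_
    ring
  rw [this]
  apply div_nonneg _ (by positivity)
  have := sq_sum_pow_nonneg B c k
  simp_rw [← hentry] at this
  exact this

end ExpPSD
section Separation
variable {Γ : Type*} [Group Γ]

/-- Hermitian elements of the augmentation ideal. -/
noncomputable def Wsub (Γ : Type*) [Group Γ] : Submodule ℝ (MonoidAlgebra ℝ Γ) :=
  augIdeal Γ ⊓ LinearMap.ker (astarL Γ - LinearMap.id)

lemma mem_Wsub {θ : MonoidAlgebra ℝ Γ} : θ ∈ Wsub Γ ↔ θ ∈ augIdeal Γ ∧ astar θ = θ := by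
  rw [Wsub, Submodule.mem_inf, LinearMap.mem_ker, LinearMap.sub_apply, LinearMap.id_apply,
    astarL_apply, sub_eq_zero]

lemma sq_mem_Wsub (x : Γ) : lsq x ∈ Wsub Γ := mem_Wsub.mpr ⟨sq_mem_augIdeal x, astar_sq x⟩

lemma herm_expand {θ : MonoidAlgebra ℝ Γ} (hI : θ ∈ augIdeal Γ) (hh : astar θ = θ) :
    θ = ∑ x ∈ θ.coeff.support, (-(θ.coeff x) / 2) • lsq x := by
  have h := sum_smul_sq θ
  rw [aug_eq_zero_of_mem hI, hh, mul_zero, zero_smul] at h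
  have h2 : ∑ x ∈ θ.coeff.support, (-(θ.coeff x) / 2) • lsq x
      = (-(2⁻¹ : ℝ)) • ∑ x ∈ θ.coeff.support, θ.coeff x • lsq x := by
    rw [Finset.smul_sum]
    refine Finset.sum_congr rfl fun x _ => ?_
    rw [smul_smul]
    congr 1
    ring
  rw [h2, h]
  module

lemma square_expand {ι : Type*} (s : Finset ι) (c : ι → ℝ) (g : ι → Γ) :
    astar (∑ i ∈ s, c i • (single (g i) 1 : MonoidAlgebra ℝ Γ))
        * (∑ i ∈ s, c i • (single (g i) 1 : MonoidAlgebra ℝ Γ))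
      = ∑ i ∈ s, ∑ j ∈ s, (c i * c j) • (single ((g i)⁻¹ * g j) 1 : MonoidAlgebra ℝ Γ) := by
  have ha : astar (∑ i ∈ s, c i • (single (g i) 1 : MonoidAlgebra ℝ Γ))
      = ∑ i ∈ s, c i • (single (g i)⁻¹ 1 : MonoidAlgebra ℝ Γ) := by
    rw [← astarL_apply, map_sum]
    exact Finset.sum_congr rfl fun i _ => by rw [astarL_apply, astar_smul, astar_single]
  rw [ha, Finset.sum_mul]
  refine Finset.sum_congr rfl fun i _ => ?_
  rw [Finset.mul_sum]
  refine Finset.sum_congr rfl fun j _ => ?_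
  rw [smul_mul_assoc, mul_smul_comm, MonoidAlgebra.single_mul_single, one_mul, smul_smul]

lemma sum_single_mem_augIdeal {ι : Type*} (s : Finset ι) (c : ι → ℝ) (g : ι → Γ)
    (h0 : ∑ i ∈ s, c i = 0) :
    (∑ i ∈ s, c i • (single (g i) 1 : MonoidAlgebra ℝ Γ)) ∈ augIdeal Γ := by
  rw [mem_augIdeal, map_sum]
  rw [← h0]
  refine Finset.sum_congr rfl fun i _ => ?_
  rw [map_smul, aug_single, smul_eq_mul, mul_one]

lemma sq_comb {ι : Type*} (s : Finset ι) (c : ι → ℝ) (g : ι → Γ) (h0 : ∑ i ∈ s, c i = 0) :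
    astar (∑ i ∈ s, c i • (single (g i) 1 : MonoidAlgebra ℝ Γ))
        * (∑ i ∈ s, c i • (single (g i) 1 : MonoidAlgebra ℝ Γ))
      = ∑ i ∈ s, ∑ j ∈ s, (-(c i * c j) / 2) • lsq ((g i)⁻¹ * g j) := by
  rw [square_expand]
  have expand : ∀ i j : ι, (-(c i * c j) / 2) • lsq ((g i)⁻¹ * g j)
      = (-(c i * c j)) • (1 : MonoidAlgebra ℝ Γ)
        + ((c i * c j / 2) • (single ((g i)⁻¹ * g j) 1 : MonoidAlgebra ℝ Γ)
        + (c i * c j / 2) • (single ((g j)⁻¹ * g i) 1 : MonoidAlgebra ℝ Γ)) := by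
    intro i j
    rw [lsq, mul_inv_rev, inv_inv]
    have h2 : (2 : MonoidAlgebra ℝ Γ) = (2 : ℝ) • (1 : MonoidAlgebra ℝ Γ) := by
      rw [two_smul]
      norm_num
    rw [h2]
    module
  simp_rw [expand]
  rw [Finset.sum_congr rfl (fun i (_ : i ∈ s) => Finset.sum_add_distrib),
    Finset.sum_add_distrib]
  have hzero : ∑ i ∈ s, ∑ j ∈ s, (-(c i * c j)) • (1 : MonoidAlgebra ℝ Γ) = 0 := by
    have : ∀ i : ι, ∑ j ∈ s, (-(c i * c j)) • (1 : MonoidAlgebra ℝ Γ) = 0 := by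
      intro i
      rw [← Finset.sum_smul]
      have : ∑ j ∈ s, -(c i * c j) = 0 := by
        simp_rw [← neg_mul]
        rw [← Finset.mul_sum, h0, mul_zero]
      rw [this, zero_smul]
    rw [Finset.sum_congr rfl fun i _ => this i, Finset.sum_const, smul_zero]
  rw [hzero, zero_add]
  rw [Finset.sum_congr rfl (fun i (_ : i ∈ s) => Finset.sum_add_distrib),
    Finset.sum_add_distrib]
  have hswap : ∑ i ∈ s, ∑ j ∈ s, (c i * c j / 2) • (single ((g j)⁻¹ * g i) 1 : MonoidAlgebra ℝ Γ)
      = ∑ i ∈ s, ∑ j ∈ s, (c i * c j / 2) • (single ((g i)⁻¹ * g j) 1 : MonoidAlgebra ℝ Γ) := by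
    rw [Finset.sum_comm]
    refine Finset.sum_congr rfl fun i _ => Finset.sum_congr rfl fun j _ => ?_
    rw [mul_comm (c j) (c i)]
  rw [hswap, ← Finset.sum_add_distrib]
  refine Finset.sum_congr rfl fun i _ => ?_
  rw [← Finset.sum_add_distrib]
  refine Finset.sum_congr rfl fun j _ => ?_
  rw [← add_smul]
  congr 1
  ring

lemma SOSI_coeff_one_nonneg {σ : MonoidAlgebra ℝ Γ} (h : σ ∈ SOSI Γ) : 0 ≤ σ.coeff 1 := by
  classical
  obtain ⟨n, f, _, rfl⟩ := h
  have happ : (∑ i, astar (f i) * f i).coeff 1 = ∑ i, (astar (f i) * f i).coeff 1 := by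
    rw [MonoidAlgebra.coeff_sum, Finset.sum_apply']
  rw [happ]
  refine Finset.sum_nonneg fun i _ => ?_
  set ζ := f i
  have hζ : ζ = ∑ x ∈ ζ.coeff.support, ζ.coeff x • (single x 1 : MonoidAlgebra ℝ Γ) :=
    (sum_smul_single ζ).symm
  have hsq : astar ζ * ζ
      = ∑ x ∈ ζ.coeff.support, ∑ y ∈ ζ.coeff.support, (ζ.coeff x * ζ.coeff y) • (single (x⁻¹ * y) 1 : MonoidAlgebra ℝ Γ) := by
    conv_lhs => rw [hζ]
    exact square_expand ζ.coeff.support ζ.coeff id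
  rw [hsq]
  rw [MonoidAlgebra.coeff_sum, Finset.sum_apply']
  refine Finset.sum_nonneg fun x hx => ?_
  rw [MonoidAlgebra.coeff_sum, Finset.sum_apply']
  have : ∀ y ∈ ζ.coeff.support, ((ζ.coeff x * ζ.coeff y) • (single (x⁻¹ * y) 1 : MonoidAlgebra ℝ Γ)).coeff 1
      = if x = y then ζ.coeff x * ζ.coeff y else 0 := by
    intro y _
    rw [MonoidAlgebra.coeff_smul_apply]
    show (ζ.coeff x * ζ.coeff y) • ((Finsupp.single (x⁻¹ * y) 1 : Γ →₀ ℝ) 1) = _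
    rw [Finsupp.single_apply]
    by_cases hxy : x = y
    · rw [if_pos (by rw [hxy]; simp), if_pos hxy, smul_eq_mul, mul_one]
    · rw [if_neg (fun hh => hxy (by rwa [inv_mul_eq_one] at hh)), if_neg hxy, smul_zero]
  rw [Finset.sum_congr rfl this, Finset.sum_ite_eq ζ.coeff.support x (fun y => ζ.coeff x * ζ.coeff y), if_pos hx]
  exact mul_self_nonneg _

end Separation
section Ell
variable {Γ : Type*} [Group Γ]

lemma exists_ell (μ : MonoidAlgebra ℝ Γ) (hpos : ∀ x : Γ, 0 ≤ μ.coeff x)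
    (hsymm : ∀ x : Γ, μ.coeff x⁻¹ = μ.coeff x) (hprob : ∑ x ∈ μ.coeff.support, μ.coeff x = 1)
    (hgen : Subgroup.closure ((μ.coeff.support : Set Γ)) = ⊤) (hμ1 : μ.coeff 1 < 1)
    (p : MonoidAlgebra ℝ Γ) (hpI : p ∈ augIdeal Γ) (hph : astar p = p) (hpn : p ∉ SOSI Γ) :
    ∃ ell : Γ → ℝ,
      (∀ x, 0 ≤ ell x) ∧ ell 1 = 0 ∧ (∀ x, ell x⁻¹ = ell x) ∧
      (∀ (n : ℕ) (c : Fin n → ℝ) (g : Fin n → Γ), ∑ i, c i = 0 →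
        ∑ i, ∑ j, c i * c j * ell ((g i)⁻¹ * g j) ≤ 0) ∧
      0 ≤ ∑ x ∈ p.coeff.support, p.coeff x * ell x ∧
      ∑ x ∈ (1 - μ : MonoidAlgebra ℝ Γ).coeff.support, (1 - μ).coeff x * ell x ≤ -2 := by
  classical
  set Δ : MonoidAlgebra ℝ Γ := 1 - μ with hΔdef
  have hΔI : Δ ∈ augIdeal Γ := by
    rw [mem_augIdeal, hΔdef, map_sub, map_one, aug_mu μ hprob, sub_self]
  have hΔh : astar Δ = Δ := by rw [hΔdef, astar_sub, astar_one, astar_mu μ hsymm]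
  have hΔW : Δ ∈ Wsub Γ := mem_Wsub.mpr ⟨hΔI, hΔh⟩
  have hΔ1 : Δ.coeff 1 = 1 - μ.coeff 1 := by
    rw [hΔdef, MonoidAlgebra.coeff_sub, Finsupp.sub_apply]
    congr 1
    rw [MonoidAlgebra.one_def]
    exact Finsupp.single_eq_same
  have hΔpos : 0 < Δ.coeff 1 := by rw [hΔ1]; linarith
  -- the sublinear functional
  set S : Wsub Γ → Set ℝ := fun θ => {t : ℝ | t • Δ - (θ : MonoidAlgebra ℝ Γ) ∈ SOSI Γ}
    with hSdef
  have hSne : ∀ θ : Wsub Γ, (S θ).Nonempty := by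
    intro θ
    obtain ⟨R, _, hR⟩ := exists_R μ hpos hsymm hprob hgen θ.1
      (mem_Wsub.mp θ.2).1 (mem_Wsub.mp θ.2).2
    exact ⟨R, hR⟩
  have hSlb : ∀ θ : Wsub Γ, ∀ t ∈ S θ, (θ : MonoidAlgebra ℝ Γ).coeff 1 / Δ.coeff 1 ≤ t := by
    intro θ t ht
    have h1 : 0 ≤ (t • Δ - (θ : MonoidAlgebra ℝ Γ)).coeff 1 := SOSI_coeff_one_nonneg ht
    have h2 : (t • Δ - (θ : MonoidAlgebra ℝ Γ)).coeff 1 = t * Δ.coeff 1 - (θ : MonoidAlgebra ℝ Γ).coeff 1 := by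
      rw [MonoidAlgebra.coeff_sub, Finsupp.sub_apply, MonoidAlgebra.coeff_smul_apply, smul_eq_mul]
    rw [h2] at h1
    rw [div_le_iff₀ hΔpos]
    linarith
  have hSbdd : ∀ θ : Wsub Γ, BddBelow (S θ) := fun θ => ⟨_, fun t ht => hSlb θ t ht⟩
  set q : Wsub Γ → ℝ := fun θ => sInf (S θ) with hqdef
  have hq_le : ∀ (θ : Wsub Γ) (t : ℝ), t ∈ S θ → q θ ≤ t := fun θ t ht => csInf_le (hSbdd θ) ht
  have hq_ge : ∀ (θ : Wsub Γ) (b : ℝ), (∀ t ∈ S θ, b ≤ t) → b ≤ q θ :=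
    fun θ b hb => le_csInf (hSne θ) hb
  have hq_add : ∀ θ₁ θ₂ : Wsub Γ, q (θ₁ + θ₂) ≤ q θ₁ + q θ₂ := by
    intro θ₁ θ₂
    have key : ∀ a ∈ S θ₁, ∀ b ∈ S θ₂, q (θ₁ + θ₂) ≤ a + b := by
      intro a ha b hb
      apply hq_le
      show (a + b) • Δ - ((θ₁ + θ₂ : Wsub Γ) : MonoidAlgebra ℝ Γ) ∈ SOSI Γ
      have hco : ((θ₁ + θ₂ : Wsub Γ) : MonoidAlgebra ℝ Γ)
          = (θ₁ : MonoidAlgebra ℝ Γ) + (θ₂ : MonoidAlgebra ℝ Γ) := rfl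
      have heq : (a + b) • Δ - ((θ₁ : MonoidAlgebra ℝ Γ) + (θ₂ : MonoidAlgebra ℝ Γ))
          = (a • Δ - (θ₁ : MonoidAlgebra ℝ Γ)) + (b • Δ - (θ₂ : MonoidAlgebra ℝ Γ)) := by
        rw [add_smul]; abel
      rw [hco, heq]
      exact SOSI_add ha hb
    have h1 : ∀ b ∈ S θ₂, q (θ₁ + θ₂) - b ≤ q θ₁ := fun b hb =>
      hq_ge θ₁ _ (fun a ha => by linarith [key a ha b hb])
    have h2 : q (θ₁ + θ₂) - q θ₁ ≤ q θ₂ := hq_ge θ₂ _ (fun b hb => by linarith [h1 b hb])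
    linarith
  have hq_smul_le : ∀ (c : ℝ), 0 < c → ∀ θ : Wsub Γ, q (c • θ) ≤ c * q θ := by
    intro c hc θ
    have hmem : ∀ t ∈ S θ, c * t ∈ S (c • θ) := by
      intro t ht
      show (c * t) • Δ - ((c • θ : Wsub Γ) : MonoidAlgebra ℝ Γ) ∈ SOSI Γ
      have hco : ((c • θ : Wsub Γ) : MonoidAlgebra ℝ Γ) = c • (θ : MonoidAlgebra ℝ Γ) := rfl
      have heq : (c * t) • Δ - c • (θ : MonoidAlgebra ℝ Γ)
          = c • (t • Δ - (θ : MonoidAlgebra ℝ Γ)) := by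
        module
      rw [hco, heq]
      exact SOSI_smul ht hc.le
    have h2 : q (c • θ) / c ≤ q θ := by
      refine hq_ge θ _ (fun t ht => ?_)
      rw [div_le_iff₀ hc]
      calc q (c • θ) ≤ c * t := hq_le _ _ (hmem t ht)
        _ = t * c := mul_comm _ _
    calc q (c • θ) = (q (c • θ) / c) * c := by field_simp
      _ ≤ q θ * c := mul_le_mul_of_nonneg_right h2 hc.le
      _ = c * q θ := mul_comm _ _
  have hq_smul : ∀ (c : ℝ), 0 < c → ∀ θ : Wsub Γ, q (c • θ) = c * q θ := by
    intro c hc θ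
    refine le_antisymm (hq_smul_le c hc θ) ?_
    have h := hq_smul_le c⁻¹ (by positivity) (c • θ)
    rw [smul_smul, inv_mul_cancel₀ (ne_of_gt hc), one_smul] at h
    have := mul_le_mul_of_nonneg_left h hc.le
    rw [← mul_assoc, mul_inv_cancel₀ (ne_of_gt hc), one_mul] at this
    linarith
  have hq_zero : q 0 = 0 := by
    apply le_antisymm
    · apply hq_le
      show (0 : ℝ) • Δ - ((0 : Wsub Γ) : MonoidAlgebra ℝ Γ) ∈ SOSI Γ
      rw [zero_smul, Submodule.coe_zero, sub_zero]
      exact SOSI_zero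
    · refine hq_ge _ _ (fun t ht => ?_)
      have := hSlb 0 t ht
      rw [Submodule.coe_zero, MonoidAlgebra.coeff_zero, Finsupp.coe_zero, Pi.zero_apply, zero_div] at this
      exact this
  -- the point to separate
  have hpW : p ∈ Wsub Γ := mem_Wsub.mpr ⟨hpI, hph⟩
  set pW : Wsub Γ := ⟨p, hpW⟩ with hpWdef
  have hp0 : pW ≠ 0 := by
    intro h
    apply hpn
    have hp' : p = 0 := congrArg Subtype.val h
    rw [hp']
    exact SOSI_zero
  have hqnegp : 0 ≤ q (-pW) := by
    by_contra hcon
    push_neg at hcon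
    obtain ⟨t, ht, htneg⟩ := exists_lt_of_csInf_lt (hSne (-pW)) hcon
    apply hpn
    have hmem : t • Δ - (((-pW) : Wsub Γ) : MonoidAlgebra ℝ Γ) ∈ SOSI Γ := ht
    rw [show (((-pW) : Wsub Γ) : MonoidAlgebra ℝ Γ) = -p from rfl, sub_neg_eq_add] at hmem
    have hsplit : p = (t • Δ + p) + (-t) • Δ := by
      rw [neg_smul]; abel
    rw [hsplit]
    exact SOSI_add hmem (SOSI_smul (delta_SOSI μ hpos hsymm hprob) (by linarith))
  set α : ℝ := -q (-pW) with hαdef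
  have hα0 : α ≤ 0 := by rw [hαdef]; linarith
  have hqq : ∀ θ : Wsub Γ, 0 ≤ q θ + q (-θ) := by
    intro θ
    have h := hq_add θ (-θ)
    rw [add_neg_cancel, hq_zero] at h
    linarith
  set f : (Wsub Γ) →ₗ.[ℝ] ℝ := LinearPMap.mkSpanSingleton pW α hp0 with hfdef
  have hf_le : ∀ t : f.domain, f t ≤ q t.1 := by
    intro t
    obtain ⟨c, hc⟩ := Submodule.mem_span_singleton.mp t.2
    have hmem : c • pW ∈ f.domain := by
      rw [hc]
      exact t.2
    have hft : f t = c * α := by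
      have ht' : t = ⟨c • pW, hmem⟩ := Subtype.ext hc.symm
      rw [ht']
      have h5 := LinearPMap.mkSpanSingleton'_apply pW α
        (fun c' hc' => (smul_eq_zero.1 hc').elim (fun h => by rw [h, RingHom.id_apply, zero_smul])
          fun hx' => absurd hx' hp0) c hmem
      exact h5.trans (smul_eq_mul ..)
    rw [hft, ← hc]
    rcases lt_trichotomy c 0 with hcs | hcs | hcs
    · have e1 : c • pW = (-c) • (-pW) := by rw [smul_neg, neg_smul, neg_neg]
      rw [e1, hq_smul (-c) (by linarith) (-pW)]
      have : c * α = (-c) * q (-pW) := by rw [hαdef]; ring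
      linarith [this.le]
    · rw [hcs, zero_smul, hq_zero, zero_mul]
    · rw [hq_smul c hcs pW]
      have h1 : α ≤ q pW := by
        have := hqq pW
        rw [hαdef]
        linarith
      exact mul_le_mul_of_nonneg_left h1 hcs.le
  obtain ⟨φ, hφf, hφle⟩ := exists_extension_of_le_sublinear f q
    (fun c hc x => hq_smul c hc x) hq_add hf_le
  have hφ_pos : ∀ θ : Wsub Γ, (θ : MonoidAlgebra ℝ Γ) ∈ SOSI Γ → 0 ≤ φ θ := by
    intro θ hθ
    have h1 : q (-θ) ≤ 0 := by
      apply hq_le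
      show (0 : ℝ) • Δ - ((-θ : Wsub Γ) : MonoidAlgebra ℝ Γ) ∈ SOSI Γ
      rw [zero_smul, show ((-θ : Wsub Γ) : MonoidAlgebra ℝ Γ) = -(θ : MonoidAlgebra ℝ Γ) from rfl,
        zero_sub, neg_neg]
      exact hθ
    have h2 := hφle (-θ)
    rw [map_neg] at h2
    linarith
  have hφΔ : 1 ≤ φ ⟨Δ, hΔW⟩ := by
    have h1 : q (-(⟨Δ, hΔW⟩ : Wsub Γ)) ≤ -1 := by
      apply hq_le
      show (-1 : ℝ) • Δ - ((-(⟨Δ, hΔW⟩ : Wsub Γ) : Wsub Γ) : MonoidAlgebra ℝ Γ) ∈ SOSI Γ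
      rw [show ((-(⟨Δ, hΔW⟩ : Wsub Γ) : Wsub Γ) : MonoidAlgebra ℝ Γ) = -Δ from rfl,
        neg_smul, one_smul, sub_neg_eq_add, neg_add_cancel]
      exact SOSI_zero
    have h2 := hφle (-(⟨Δ, hΔW⟩ : Wsub Γ))
    rw [map_neg] at h2
    linarith
  have hφp : φ pW ≤ 0 := by
    have h1 : φ pW = α := by
      have h2 := hφf ⟨pW, Submodule.mem_span_singleton_self pW⟩
      rw [h2]
      exact LinearPMap.mkSpanSingleton_apply ℝ ℝ hp0 α
    rw [h1]
    exact hα0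
  -- the function ell
  set ell : Γ → ℝ := fun x => φ ⟨lsq x, sq_mem_Wsub x⟩ with helldef
  have hell_formula : ∀ (θ : MonoidAlgebra ℝ Γ) (hθ : θ ∈ Wsub Γ),
      φ ⟨θ, hθ⟩ = ∑ x ∈ θ.coeff.support, (-(θ.coeff x) / 2) * ell x := by
    intro θ hθ
    have hWid : (⟨θ, hθ⟩ : Wsub Γ)
        = ∑ x ∈ θ.coeff.support, (-(θ.coeff x) / 2) • (⟨lsq x, sq_mem_Wsub x⟩ : Wsub Γ) := by
      apply Subtype.ext
      rw [AddSubmonoidClass.coe_finset_sum]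
      exact herm_expand (mem_Wsub.mp hθ).1 (mem_Wsub.mp hθ).2
    rw [hWid, map_sum]
    exact Finset.sum_congr rfl fun x _ => by rw [map_smul, smul_eq_mul]
  have hflip : ∀ (s : Finset Γ) (a : Γ → ℝ),
      ∑ x ∈ s, a x * ell x = (-2) * ∑ x ∈ s, (-(a x) / 2) * ell x := by
    intro s a
    rw [Finset.mul_sum]
    exact Finset.sum_congr rfl fun x _ => by ring
  refine ⟨ell, ?_, ?_, ?_, ?_, ?_, ?_⟩
  · intro x
    exact hφ_pos _ (sq_mem_SOSI x)
  · show φ ⟨lsq 1, sq_mem_Wsub 1⟩ = 0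
    have h0 : (⟨lsq 1, sq_mem_Wsub 1⟩ : Wsub Γ) = 0 := Subtype.ext sq_one
    rw [h0, map_zero]
  · intro x
    show φ ⟨lsq x⁻¹, sq_mem_Wsub x⁻¹⟩ = φ ⟨lsq x, sq_mem_Wsub x⟩
    exact congrArg φ (Subtype.ext (sq_inv x))
  · -- conditional negative definiteness
    intro n c g h0
    set ζ : MonoidAlgebra ℝ Γ := ∑ i, c i • single (g i) 1 with hζdef
    have hζI : ζ ∈ augIdeal Γ := sum_single_mem_augIdeal Finset.univ c g h0
    have hσSOSI : astar ζ * ζ ∈ SOSI Γ := SOSI_square hζI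
    have hid : astar ζ * ζ = ∑ i, ∑ j, (-(c i * c j) / 2) • lsq ((g i)⁻¹ * g j) :=
      sq_comb Finset.univ c g h0
    have hσW : astar ζ * ζ ∈ Wsub Γ := by
      rw [hid]
      exact Submodule.sum_mem _ fun i _ => Submodule.sum_mem _ fun j _ =>
        Submodule.smul_mem _ _ (sq_mem_Wsub _)
    have h1 : 0 ≤ φ ⟨astar ζ * ζ, hσW⟩ := hφ_pos _ hσSOSI
    have h2 : φ ⟨astar ζ * ζ, hσW⟩
        = ∑ i, ∑ j, (-(c i * c j) / 2) * ell ((g i)⁻¹ * g j) := by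
      have hWid : (⟨astar ζ * ζ, hσW⟩ : Wsub Γ)
          = ∑ i, ∑ j, (-(c i * c j) / 2) • (⟨lsq ((g i)⁻¹ * g j),
              sq_mem_Wsub _⟩ : Wsub Γ) := by
        apply Subtype.ext
        rw [AddSubmonoidClass.coe_finset_sum]
        rw [Finset.sum_congr rfl fun (i : Fin n) (_ : i ∈ Finset.univ) =>
          (AddSubmonoidClass.coe_finset_sum _ _ : _ = _)]
        exact hid
      rw [hWid, map_sum]
      refine Finset.sum_congr rfl fun i _ => ?_
      rw [map_sum]
      exact Finset.sum_congr rfl fun j _ => by rw [map_smul, smul_eq_mul]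
    rw [h2] at h1
    have h3 : ∑ i, ∑ j, c i * c j * ell ((g i)⁻¹ * g j)
        = (-2) * ∑ i, ∑ j, (-(c i * c j) / 2) * ell ((g i)⁻¹ * g j) := by
      rw [Finset.mul_sum]
      refine Finset.sum_congr rfl fun i _ => ?_
      rw [Finset.mul_sum]
      exact Finset.sum_congr rfl fun j _ => by ring
    rw [h3]
    linarith
  · have h1 := hell_formula p hpW
    have h2 : φ (⟨p, hpW⟩ : Wsub Γ) ≤ 0 := hφp
    rw [h1] at h2
    rw [hflip]
    linarith
  · have h1 := hell_formula Δ hΔW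
    rw [h1] at hφΔ
    rw [hflip]
    linarith

end Ell
section Pairing
variable {Γ : Type*} [Group Γ]

/-- Pairing `η ↦ ∑_x η(x) h(x)` as a linear map. -/
noncomputable def pairL (h : Γ → ℝ) : MonoidAlgebra ℝ Γ →ₗ[ℝ] ℝ where
  toFun η := Finsupp.sum η.coeff fun a b => b * h a
  map_add' a b := by rw [MonoidAlgebra.coeff_add]; exact Finsupp.sum_add_index' (fun a => by simp) (fun a b₁ b₂ => by ring)
  map_smul' c a := by
    simp only [RingHom.id_apply, smul_eq_mul]
    rw [MonoidAlgebra.coeff_smul, Finsupp.sum_smul_index (fun a => by simp), Finsupp.mul_sum]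
    exact Finsupp.sum_congr fun x _ => by ring

lemma pairL_single (h : Γ → ℝ) (x : Γ) (c : ℝ) :
    pairL h (MonoidAlgebra.single x c) = c * h x := by
  show (Finsupp.single x c).sum (fun a b => b * h a) = c * h x
  rw [Finsupp.sum_single_index]
  simp

lemma pairL_apply (h : Γ → ℝ) (η : MonoidAlgebra ℝ Γ) :
    pairL h η = ∑ x ∈ η.coeff.support, η.coeff x * h x := by
  conv_lhs => rw [← sum_smul_single η]
  rw [map_sum]
  refine Finset.sum_congr rfl fun x _ => ?_
  rw [map_smul, pairL_single, smul_eq_mul]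
  ring

lemma pairL_one (h : Γ → ℝ) : pairL h (1 : MonoidAlgebra ℝ Γ) = h 1 := by
  rw [MonoidAlgebra.one_def, pairL_single, one_mul]

/-- Positive definiteness of the Gaussian kernel built from a conditionally negative
definite function. -/
lemma gaussian_pd (ell : Γ → ℝ) (hell1 : ell 1 = 0) (hellsymm : ∀ x, ell x⁻¹ = ell x)
    (hcnd : ∀ (n : ℕ) (c : Fin n → ℝ) (g : Fin n → Γ), ∑ i, c i = 0 →
      ∑ i, ∑ j, c i * c j * ell ((g i)⁻¹ * g j) ≤ 0)
    (t : ℝ) (ht : 0 ≤ t) {n : ℕ} (w : Fin n → Γ) (d : Fin n → ℝ) :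
    0 ≤ ∑ i, ∑ j, d i * d j * Real.exp (-t * ell ((w i)⁻¹ * w j)) := by
  classical
  set A : Matrix (Fin n) (Fin n) ℝ :=
    Matrix.of fun i j => t * (ell (w i) + ell (w j) - ell ((w i)⁻¹ * w j)) with hAdef
  have hAapp : ∀ i j, A i j = t * (ell (w i) + ell (w j) - ell ((w i)⁻¹ * w j)) := fun i j => rfl
  have hellswap : ∀ i j, ell ((w j)⁻¹ * w i) = ell ((w i)⁻¹ * w j) := by
    intro i j
    rw [← hellsymm ((w j)⁻¹ * w i), mul_inv_rev, inv_inv]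
  have hAsymm : ∀ i j, A j i = A i j := by
    intro i j
    rw [hAapp, hAapp, hellswap]
    ring
  have hquad : ∀ d' : Fin n → ℝ, 0 ≤ ∑ i, ∑ j, d' i * d' j * A i j := by
    intro d'
    have hkey : ∑ i, ∑ j, d' i * d' j * ell ((w i)⁻¹ * w j)
        ≤ 2 * (∑ i, d' i) * (∑ i, d' i * ell (w i)) := by
      have hsum0 : ∑ i : Fin (n+1), (Fin.snoc d' (-(∑ k, d' k)) : Fin (n+1) → ℝ) i = 0 := by
        rw [Fin.sum_univ_castSucc]
        simp [Fin.snoc_castSucc, Fin.snoc_last]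
      have hc := hcnd (n + 1) (Fin.snoc d' (-(∑ k, d' k))) (Fin.snoc w 1) hsum0
      simp only [Fin.sum_univ_castSucc, Fin.snoc_castSucc, Fin.snoc_last, inv_one, one_mul,
        mul_one, hell1, mul_zero, add_zero, hellsymm] at hc
      rw [Finset.sum_add_distrib] at hc
      have e1 : ∀ s : ℝ, ∑ i : Fin n, d' i * -s * ell (w i)
          = -(s * ∑ i : Fin n, d' i * ell (w i)) := by
        intro s
        rw [Finset.mul_sum, ← Finset.sum_neg_distrib]
        exact Finset.sum_congr rfl fun i _ => by ring
      have e2 : ∀ s : ℝ, ∑ j : Fin n, -s * d' j * ell (w j)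
          = -(s * ∑ i : Fin n, d' i * ell (w i)) := by
        intro s
        rw [Finset.mul_sum, ← Finset.sum_neg_distrib]
        exact Finset.sum_congr rfl fun i _ => by ring
      rw [e1 (∑ k, d' k), e2 (∑ k, d' k)] at hc
      nlinarith [hc]
    have hprod1 : (∑ i, d' i * ell (w i)) * (∑ j, d' j)
        = ∑ i, ∑ j, (d' i * ell (w i)) * d' j := Finset.sum_mul_sum _ _ _ _
    have hprod2 : (∑ i, d' i) * (∑ j, d' j * ell (w j))
        = ∑ i, ∑ j, d' i * (d' j * ell (w j)) := Finset.sum_mul_sum _ _ _ _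
    have key2 : ∑ i, ∑ j, d' i * d' j * A i j
        = ((∑ i, d' i * ell (w i)) * (∑ j, d' j) + (∑ i, d' i) * (∑ j, d' j * ell (w j))
            - ∑ i, ∑ j, d' i * d' j * ell ((w i)⁻¹ * w j)) * t := by
      rw [hprod1, hprod2]
      have key3 : ∀ i, ∑ j, d' i * d' j * A i j
          = (∑ j, ((d' i * ell (w i)) * d' j + d' i * (d' j * ell (w j))
              - d' i * d' j * ell ((w i)⁻¹ * w j))) * t := by
        intro i
        rw [Finset.sum_mul]
        refine Finset.sum_congr rfl fun j _ => ?_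
        rw [hAapp]
        ring
      rw [Finset.sum_congr rfl fun i _ => key3 i, ← Finset.sum_mul]
      congr 1
      simp only [Finset.sum_sub_distrib, Finset.sum_add_distrib]
    rw [key2]
    have h4 : 0 ≤ ((∑ i, d' i * ell (w i)) * (∑ j, d' j) + (∑ i, d' i) * (∑ j, d' j * ell (w j))
        - ∑ i, ∑ j, d' i * d' j * ell ((w i)⁻¹ * w j)) := by nlinarith [hkey]
    exact mul_nonneg h4 ht
  -- A is positive semidefinite
  have hA : A.PosSemidef := by
    refine Matrix.PosSemidef.of_dotProduct_mulVec_nonneg ?_ ?_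
    · ext i j
      rw [Matrix.conjTranspose_apply]
      simp only [star_trivial]
      exact hAsymm i j
    · intro x
      have hx : star x = x := by
        funext i
        simp [star_trivial]
      rw [hx]
      show 0 ≤ dotProduct x (A.mulVec x)
      rw [dotProduct]
      have : ∀ i, x i * (A.mulVec x) i = ∑ j, x i * x j * A i j := by
        intro i
        rw [Matrix.mulVec, dotProduct, Finset.mul_sum]
        exact Finset.sum_congr rfl fun j _ => by ring
      rw [Finset.sum_congr rfl fun i _ => this i]
      exact hquad x
  -- from PSD matrix to Gaussian kernel
  have hker : ∀ i j, d i * d j * Real.exp (-t * ell ((w i)⁻¹ * w j))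
      = (d i * Real.exp (-t * ell (w i))) * (d j * Real.exp (-t * ell (w j)))
          * Real.exp (A i j) := by
    intro i j
    have : Real.exp (-t * ell ((w i)⁻¹ * w j))
        = Real.exp (-t * ell (w i)) * Real.exp (-t * ell (w j)) * Real.exp (A i j) := by
      rw [← Real.exp_add, ← Real.exp_add]
      congr 1
      rw [hAapp]
      ring
    rw [this]
    ring
  rw [Finset.sum_congr rfl fun i (_ : i ∈ Finset.univ) =>
    Finset.sum_congr rfl fun j (_ : j ∈ Finset.univ) => hker i j]
  exact entrywise_exp_psd A hA (fun i => d i * Real.exp (-t * ell (w i)))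

/-- Pairing of a sum of squares against the Gaussian kernel is nonnegative. -/
lemma pair_SOS_nonneg (ell : Γ → ℝ) (hell1 : ell 1 = 0) (hellsymm : ∀ x, ell x⁻¹ = ell x)
    (hcnd : ∀ (n : ℕ) (c : Fin n → ℝ) (g : Fin n → Γ), ∑ i, c i = 0 →
      ∑ i, ∑ j, c i * c j * ell ((g i)⁻¹ * g j) ≤ 0)
    (t : ℝ) (ht : 0 ≤ t) {σ : MonoidAlgebra ℝ Γ} (hσ : σ ∈ SOS Γ) :
    0 ≤ pairL (fun x => Real.exp (-t * ell x)) σ := by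
  classical
  obtain ⟨m, f, rfl⟩ := hσ
  rw [map_sum]
  refine Finset.sum_nonneg fun i _ => ?_
  set ζ := f i with hζdef
  -- expand the square
  have hsq : astar ζ * ζ
      = ∑ x ∈ ζ.coeff.support, ∑ y ∈ ζ.coeff.support,
          (ζ.coeff x * ζ.coeff y) • (single (x⁻¹ * y) 1 : MonoidAlgebra ℝ Γ) := by
    conv_lhs => rw [← sum_smul_single ζ]
    exact square_expand ζ.coeff.support ζ.coeff id
  rw [hsq, map_sum]
  have happ : ∀ x ∈ ζ.coeff.support, (pairL (fun x => Real.exp (-t * ell x)))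
      (∑ y ∈ ζ.coeff.support, (ζ.coeff x * ζ.coeff y) • (single (x⁻¹ * y) 1 : MonoidAlgebra ℝ Γ))
      = ∑ y ∈ ζ.coeff.support, (ζ.coeff x * ζ.coeff y) * Real.exp (-t * ell (x⁻¹ * y)) := by
    intro x _
    rw [map_sum]
    refine Finset.sum_congr rfl fun y _ => ?_
    rw [map_smul, pairL_single, one_mul, smul_eq_mul]
  rw [Finset.sum_congr rfl happ]
  -- reindex by Fin
  set s := ζ.coeff.support with hsdef
  set N := s.card with hNdef
  have e : Fin N ≃ ↥s := (s.equivFin).symm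
  have hreindex : ∑ x ∈ s, ∑ y ∈ s, (ζ.coeff x * ζ.coeff y) * Real.exp (-t * ell (x⁻¹ * y))
      = ∑ i : Fin N, ∑ j : Fin N,
          (ζ.coeff (e i).1 * ζ.coeff (e j).1) * Real.exp (-t * ell (((e i).1)⁻¹ * (e j).1)) := by
    rw [← Finset.sum_coe_sort s, ← Equiv.sum_comp e
      (fun a => ∑ y ∈ s, (ζ.coeff a.1 * ζ.coeff y) * Real.exp (-t * ell ((a.1)⁻¹ * y)))]
    refine Finset.sum_congr rfl fun i _ => ?_
    rw [← Finset.sum_coe_sort s, ← Equiv.sum_comp e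
      (fun b => (ζ.coeff (e i).1 * ζ.coeff b.1) * Real.exp (-t * ell (((e i).1)⁻¹ * b.1)))]
  rw [hreindex]
  have := gaussian_pd ell hell1 hellsymm hcnd t ht (fun i => (e i).1) (fun i => ζ.coeff (e i).1)
  simpa using this

end Pairing
/-- the closure of `Σ²I[Γ]` equals `I[Γ] ∩ closure(Σ²ℝ[Γ])`. -/
theorem stmt6 {Γ : Type*} [Group Γ]
    (μ : MonoidAlgebra ℝ Γ) (hpos : ∀ x : Γ, 0 ≤ μ.coeff x) (hsymm : ∀ x : Γ, μ.coeff x⁻¹ = μ.coeff x)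
    (hprob : ∑ x ∈ μ.coeff.support, μ.coeff x = 1)
    (hgen : Subgroup.closure (μ.coeff.support : Set Γ) = ⊤)
    (ξ : MonoidAlgebra ℝ Γ) (hξ : ξ ∈ augIdeal Γ) (hherm : astar ξ = ξ) :
    (∀ ε : ℝ, 0 < ε → ξ + ε • (1 - μ) ∈ SOSI Γ) ↔
    (∀ ε : ℝ, 0 < ε → ξ + ε • (1 : MonoidAlgebra ℝ Γ) ∈ SOS Γ) := by
  classical
  constructor
  · -- easy direction
    intro hL ε hε
    have h1 := hL (ε / 2) (by linarith)
    have h2 : (ε / 2) • ((1 : MonoidAlgebra ℝ Γ) + μ) ∈ SOS Γ :=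
      SOS_smul (oneplus_SOS μ hpos hsymm hprob) (by linarith)
    have h3 : ξ + ε • (1 : MonoidAlgebra ℝ Γ)
        = (ξ + (ε / 2) • ((1 : MonoidAlgebra ℝ Γ) - μ))
          + (ε / 2) • ((1 : MonoidAlgebra ℝ Γ) + μ) := by
      module
    rw [h3]
    exact SOS_add (SOSI_subset_SOS h1) h2
  · -- hard direction
    intro hR ε hε
    by_cases htriv : μ.coeff 1 = 1
    · -- degenerate case: the group is trivial
      have h1m : (1 : Γ) ∈ μ.coeff.support := Finsupp.mem_support_iff.mpr (by rw [htriv]; norm_num)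
      have hsupp : μ.coeff.support = {1} := by
        apply Finset.eq_singleton_iff_unique_mem.mpr
        refine ⟨h1m, ?_⟩
        intro x hx
        by_contra hx1
        have hxe : x ∈ μ.coeff.support.erase 1 := Finset.mem_erase.mpr ⟨hx1, hx⟩
        have hsum := hprob
        rw [← Finset.add_sum_erase _ _ h1m, htriv] at hsum
        have hposx : 0 < μ.coeff x := lt_of_le_of_ne (hpos x) (Ne.symm (Finsupp.mem_support_iff.mp hx))
        have hnn : 0 ≤ ∑ y ∈ (μ.coeff.support.erase 1).erase x, μ.coeff y :=
          Finset.sum_nonneg fun y _ => hpos y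
        rw [← Finset.add_sum_erase _ _ hxe] at hsum
        linarith
      have hone : ∀ g : Γ, g = 1 := by
        intro g
        have hg : g ∈ Subgroup.closure ((μ.coeff.support : Set Γ)) := by rw [hgen]; trivial
        rw [hsupp, Finset.coe_singleton, Subgroup.closure_singleton_one] at hg
        exact Subgroup.mem_bot.mp hg
      have hμeq : μ = 1 := by
        ext g
        rw [hone g, htriv, MonoidAlgebra.one_def]
        rw [MonoidAlgebra.coeff_single, Finsupp.single_eq_same]
      have hξ0 : ξ = 0 := by
        have hs : ∑ x ∈ ξ.coeff.support, ξ.coeff x = 0 := by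
          rw [← aug_apply]
          exact aug_eq_zero_of_mem hξ
        have hss : ξ.coeff.support ⊆ {1} := fun x _ => Finset.mem_singleton.mpr (hone x)
        rcases Finset.subset_singleton_iff.mp hss with he | he
        · exact MonoidAlgebra.coeff_injective (Finsupp.support_eq_empty.mp he)
        · ext g
          rw [hone g]
          rw [he, Finset.sum_singleton] at hs
          exact hs
      rw [hξ0, hμeq]
      simpa using SOSI_zero
    · -- main case
      have hμle : μ.coeff 1 ≤ 1 := by
        by_cases h1m : (1 : Γ) ∈ μ.coeff.support
        · calc μ.coeff 1 ≤ ∑ x ∈ μ.coeff.support, μ.coeff x := Finset.single_le_sum (fun x _ => hpos x) h1m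
            _ = 1 := hprob
        · rw [Finsupp.notMem_support_iff.mp h1m]; norm_num
      have hμ1 : μ.coeff 1 < 1 := lt_of_le_of_ne hμle htriv
      by_contra hpn
      set p : MonoidAlgebra ℝ Γ := ξ + ε • (1 - μ) with hpdef
      have hΔI : ((1 : MonoidAlgebra ℝ Γ) - μ) ∈ augIdeal Γ := by
        rw [mem_augIdeal, map_sub, map_one, aug_mu μ hprob, sub_self]
      have hpI : p ∈ augIdeal Γ := Submodule.add_mem _ hξ (Submodule.smul_mem _ _ hΔI)
      have hph : astar p = p := by
        rw [hpdef, astar_add, astar_smul, astar_sub, astar_one, astar_mu μ hsymm, hherm]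
      obtain ⟨ell, hell0, hell1, hellsymm, hcnd, hppos, hΔneg⟩ :=
        exists_ell μ hpos hsymm hprob hgen hμ1 p hpI hph hpn
      have hXi : 2 * ε ≤ pairL ell ξ := by
        have h1 : 0 ≤ pairL ell p := by rw [pairL_apply]; exact hppos
        have h2 : pairL ell ((1 : MonoidAlgebra ℝ Γ) - μ) ≤ -2 := by
          rw [pairL_apply]; exact hΔneg
        have h3 : pairL ell p = pairL ell ξ + ε * pairL ell ((1 : MonoidAlgebra ℝ Γ) - μ) := by
          rw [hpdef, map_add, map_smul, smul_eq_mul]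
        nlinarith
      set F : ℝ → ℝ := fun t => ∑ x ∈ ξ.coeff.support, ξ.coeff x * Real.exp (-t * ell x) with hFdef
      have hF_eq : ∀ t : ℝ, F t = pairL (fun x => Real.exp (-t * ell x)) ξ := by
        intro t
        rw [pairL_apply]
      have hF_nonneg : ∀ t : ℝ, 0 ≤ t → 0 ≤ F t := by
        intro t ht
        rw [hF_eq]
        by_contra hneg
        push_neg at hneg
        set δ : ℝ := -(pairL (fun x => Real.exp (-t * ell x)) ξ) with hδdef
        have hδpos : 0 < δ := by rw [hδdef]; linarith
        have hsos := hR (δ / 2) (by linarith)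
        have hp2 := pair_SOS_nonneg ell hell1 hellsymm hcnd t ht hsos
        rw [map_add, map_smul, pairL_one, smul_eq_mul, hell1, mul_zero, Real.exp_zero,
          mul_one] at hp2
        linarith [hδdef]
      have hF0 : F 0 = 0 := by
        rw [hFdef]
        simp only [neg_zero, zero_mul, Real.exp_zero, mul_one]
        rw [← aug_apply]
        exact aug_eq_zero_of_mem hξ
      have hder : HasDerivAt F (∑ x ∈ ξ.coeff.support, ξ.coeff x * (-(ell x))) 0 := by
        have hterm : ∀ x ∈ ξ.coeff.support,
            HasDerivAt (fun t : ℝ => ξ.coeff x * Real.exp (-t * ell x)) (ξ.coeff x * (-(ell x))) 0 := by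
          intro x _
          have h1 : HasDerivAt (fun t : ℝ => -t * ell x) (-(ell x)) 0 := by
            simpa using ((hasDerivAt_id (0 : ℝ)).neg.mul_const (ell x))
          have h2 := (Real.hasDerivAt_exp ((-(0 : ℝ)) * ell x)).comp 0 h1
          have h3 : HasDerivAt (fun t : ℝ => Real.exp (-t * ell x)) (-(ell x)) 0 := by
            simpa [Function.comp_def] using h2
          simpa using h3.const_mul (ξ.coeff x)
        refine (HasDerivAt.sum hterm).congr_of_eventuallyEq (Filter.Eventually.of_forall fun t => ?_)
        rw [Finset.sum_apply]
      have hderneg : (∑ x ∈ ξ.coeff.support, ξ.coeff x * (-(ell x))) < 0 := by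
        have heq : ∑ x ∈ ξ.coeff.support, ξ.coeff x * (-(ell x)) = -(pairL ell ξ) := by
          rw [pairL_apply, ← Finset.sum_neg_distrib]
          exact Finset.sum_congr rfl fun x _ => by ring
        rw [heq]
        linarith
      obtain ⟨t, ht0, hFt⟩ : ∃ t : ℝ, 0 < t ∧ F t < 0 := by
        have hdw : HasDerivWithinAt F (∑ x ∈ ξ.coeff.support, ξ.coeff x * (-(ell x))) (Set.Ioi 0) 0 :=
          hder.hasDerivWithinAt
        rw [hasDerivWithinAt_iff_tendsto_slope] at hdw
        have hev : ∀ᶠ u in nhdsWithin 0 (Set.Ioi 0 \ {0}), slope F 0 u < 0 :=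
          hdw.eventually_lt_const hderneg
        have hmem : ∀ᶠ u in nhdsWithin (0:ℝ) (Set.Ioi (0:ℝ) \ {0}), u ∈ Set.Ioi (0:ℝ) \ {0} :=
          eventually_mem_nhdsWithin
        have hdiff : (Set.Ioi (0:ℝ) \ {0}) = Set.Ioi 0 := by
          apply Set.diff_singleton_eq_self
          simp
        have hne : (nhdsWithin (0:ℝ) (Set.Ioi 0 \ {0})).NeBot := by
          rw [hdiff]
          exact nhdsGT_neBot 0
        obtain ⟨t, hst, htm⟩ := (hev.and hmem).exists
        refine ⟨t, htm.1, ?_⟩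
        have hslope : slope F 0 t = F t / t := by
          rw [slope_def_field, hF0, sub_zero, sub_zero]
        rw [hslope] at hst
        rcases div_neg_iff.mp hst with ⟨h1, h2⟩ | ⟨h1, h2⟩
        · exact absurd htm.1 (by simp at htm ⊢; linarith)
        · exact h1
      exact absurd (hF_nonneg t ht0.le) (by linarith)
end

section
/- Let Γ be a group and φ : I[Γ] → ℝ a positive linear functional (linear, φ(ξ*) = φ(ξ), and φ(η) ≥ 0 for all η ∈ Σ²I[Γ]). Define ψ : Γ → ℝ by ψ(x) = φ(1 − x). Then ψ is of conditionally negative type: for every ξ ∈ I[Γ] one has Σ_{x,y ∈ Γ} ψ(y⁻¹x) ξ(y) ξ(x) = −φ(ξ*ξ) ≤ 0. -/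
open MonoidAlgebra Finset RealInnerProductSpace

lemma aug_eq_sum {Γ : Type*} [Group Γ] (ξ : MonoidAlgebra ℝ Γ) :
    aug Γ ξ = ∑ x ∈ ξ.coeff.support, ξ.coeff x := by
  simp [aug, MonoidAlgebra.lift_apply, Finsupp.sum]

lemma eq_sum_smul_of {Γ : Type*} [Group Γ] (ξ : MonoidAlgebra ℝ Γ) :
    ξ = ∑ x ∈ ξ.coeff.support, ξ.coeff x • of ℝ Γ x := by
  conv_lhs => rw [← MonoidAlgebra.sum_coeff_single ξ]
  simp [Finsupp.sum, MonoidAlgebra.of_apply, MonoidAlgebra.smul_single']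

lemma astar_eq_sum {Γ : Type*} [Group Γ] (ξ : MonoidAlgebra ℝ Γ) :
    astar ξ = ∑ x ∈ ξ.coeff.support, ξ.coeff x • of ℝ Γ x⁻¹ := by
  ext a
  rw [MonoidAlgebra.coeff_sum, Finset.sum_apply']
  simp only [astar, MonoidAlgebra.coeff_ofCoeff, MonoidAlgebra.coeff_smul, MonoidAlgebra.coeff_single, Finsupp.equivMapDomain_apply, Equiv.inv_symm, Equiv.inv_apply,
    MonoidAlgebra.of_apply, Finsupp.smul_single', Finsupp.single_apply]
  rw [Finset.sum_eq_single a⁻¹]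
  · simp
  · intro b _ hb
    simp [inv_eq_iff_eq_inv, hb]
  · intro h
    simp [Finsupp.notMem_support_iff.mp h]

lemma astar_mul_self_eq {Γ : Type*} [Group Γ] (ξ : MonoidAlgebra ℝ Γ) :
    astar ξ * ξ = ∑ y ∈ ξ.coeff.support, ∑ x ∈ ξ.coeff.support, (ξ.coeff y * ξ.coeff x) • of ℝ Γ (y⁻¹ * x) := by
  rw [astar_eq_sum ξ]
  nth_rewrite 3 [eq_sum_smul_of ξ]
  rw [Finset.sum_mul_sum]
  refine Finset.sum_congr rfl fun y _ => Finset.sum_congr rfl fun x _ => ?_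
  rw [smul_mul_smul_comm, ← map_mul (of ℝ Γ) y⁻¹ x]

/-- `ψ(x) = φ(1-x)` is of conditionally negative type for a positive
linear functional `φ` on `I[Γ]`. -/
theorem stmt7 {Γ : Type*} [Group Γ]
    (φ : ↥(augIdeal Γ) →ₗ[ℝ] ℝ)
    (hherm : ∀ ξ : ↥(augIdeal Γ), φ ⟨astar (ξ : MonoidAlgebra ℝ Γ), astar_mem_augIdeal ξ.2⟩ = φ ξ)
    (hpos : ∀ ξ : ↥(augIdeal Γ), (ξ : MonoidAlgebra ℝ Γ) ∈ SOSI Γ → 0 ≤ φ ξ)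
    (ψ : Γ → ℝ) (hψ : ∀ x : Γ, ψ x = φ ⟨1 - of ℝ Γ x, one_sub_of_mem_augIdeal x⟩)
    (ξ : MonoidAlgebra ℝ Γ) (hξ : ξ ∈ augIdeal Γ) :
    (∑ x ∈ ξ.coeff.support, ∑ y ∈ ξ.coeff.support, ψ (y⁻¹ * x) * ξ.coeff y * ξ.coeff x)
        = - φ ⟨astar ξ * ξ, astar_mul_self_mem_augIdeal hξ⟩ ∧
      - φ ⟨astar ξ * ξ, astar_mul_self_mem_augIdeal hξ⟩ ≤ 0 := by
  have haug : aug Γ ξ = 0 := hξ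
  have h0 : ∑ y ∈ ξ.coeff.support, ∑ x ∈ ξ.coeff.support, ξ.coeff y * ξ.coeff x = 0 := by
    rw [← Finset.sum_mul_sum, ← aug_eq_sum, haug, mul_zero]
  have key2 : (∑ y ∈ ξ.coeff.support, ∑ x ∈ ξ.coeff.support,
        (ξ.coeff y * ξ.coeff x) • (⟨1 - of ℝ Γ (y⁻¹ * x), one_sub_of_mem_augIdeal _⟩ : ↥(augIdeal Γ)))
      = - ⟨astar ξ * ξ, astar_mul_self_mem_augIdeal hξ⟩ := by
    apply Subtype.ext
    push_cast
    have expand : (∑ y ∈ ξ.coeff.support, ∑ x ∈ ξ.coeff.support,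
          (ξ.coeff y * ξ.coeff x) • ((1 : MonoidAlgebra ℝ Γ) - of ℝ Γ (y⁻¹ * x)))
        = (∑ y ∈ ξ.coeff.support, ∑ x ∈ ξ.coeff.support, ξ.coeff y * ξ.coeff x) • (1 : MonoidAlgebra ℝ Γ)
          - ∑ y ∈ ξ.coeff.support, ∑ x ∈ ξ.coeff.support, (ξ.coeff y * ξ.coeff x) • of ℝ Γ (y⁻¹ * x) := by
      rw [Finset.sum_smul]
      rw [← Finset.sum_sub_distrib]
      refine Finset.sum_congr rfl fun y _ => ?_
      rw [Finset.sum_smul, ← Finset.sum_sub_distrib]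
      exact Finset.sum_congr rfl fun x _ => smul_sub _ _ _
    rw [expand, h0, zero_smul, zero_sub, astar_mul_self_eq]
  have hmain : (∑ x ∈ ξ.coeff.support, ∑ y ∈ ξ.coeff.support, ψ (y⁻¹ * x) * ξ.coeff y * ξ.coeff x)
      = - φ ⟨astar ξ * ξ, astar_mul_self_mem_augIdeal hξ⟩ := by
    rw [Finset.sum_comm]
    calc (∑ y ∈ ξ.coeff.support, ∑ x ∈ ξ.coeff.support, ψ (y⁻¹ * x) * ξ.coeff y * ξ.coeff x)
        = ∑ y ∈ ξ.coeff.support, ∑ x ∈ ξ.coeff.support, φ ((ξ.coeff y * ξ.coeff x) •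
            (⟨1 - of ℝ Γ (y⁻¹ * x), one_sub_of_mem_augIdeal _⟩ : ↥(augIdeal Γ))) := by
          refine Finset.sum_congr rfl fun y _ => Finset.sum_congr rfl fun x _ => ?_
          rw [map_smul, hψ, smul_eq_mul]; ring
      _ = φ (∑ y ∈ ξ.coeff.support, ∑ x ∈ ξ.coeff.support, (ξ.coeff y * ξ.coeff x) •
            (⟨1 - of ℝ Γ (y⁻¹ * x), one_sub_of_mem_augIdeal _⟩ : ↥(augIdeal Γ))) := by
          rw [map_sum]
          exact Finset.sum_congr rfl fun y _ => (map_sum φ _ _).symm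
      _ = - φ ⟨astar ξ * ξ, astar_mul_self_mem_augIdeal hξ⟩ := by rw [key2, map_neg]
  exact ⟨hmain, by
    rw [neg_nonpos]
    exact hpos _ ⟨1, fun _ => ξ, fun _ => hξ, by simp⟩⟩
end

section
/- Let V be a real vector space and C ⊆ V a convex subset. Then the set of algebraic interior points of the set of algebraic interior points of C equals the set of algebraic interior points of C: interior(interior(C)) = interior(C). -/
/-- The set of algebraic interior points of `C`: points `c ∈ C` such that for every `v`
there is `t ∈ (0,1]` with `(1-t)•c + t•v ∈ C`. -/
def algInterior {V : Type*} [AddCommGroup V] [Module ℝ V] (C : Set V) : Set V :=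
  {c | c ∈ C ∧ ∀ v : V, ∃ t : ℝ, t ∈ Set.Ioc (0 : ℝ) 1 ∧ (1 - t) • c + t • v ∈ C}

lemma seg_mem_algInterior {V : Type*} [AddCommGroup V] [Module ℝ V] {C : Set V}
    (hC : Convex ℝ C) {c x : V} (hc : c ∈ algInterior C) (hx : x ∈ C)
    {s : ℝ} (hs0 : 0 ≤ s) (hs1 : s < 1) : (1 - s) • c + s • x ∈ algInterior C := by
  obtain ⟨hcC, hall⟩ := hc
  constructor
  · exact hC hcC hx (by linarith) hs0 (by ring)
  · intro v
    obtain ⟨t, ⟨ht0, ht1⟩, hm⟩ := hall v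
    have hD : 0 < 1 - t * s := by nlinarith
    refine ⟨t * (1 - s) / (1 - t * s),
      ⟨div_pos (mul_pos ht0 (by linarith)) hD, ?_⟩, ?_⟩
    · rw [div_le_one hD]; nlinarith
    · have hle : (1 - s) / (1 - t * s) ≤ 1 := by
        rw [div_le_one hD]; nlinarith
      have hmem := hC hm hx (a := (1 - s) / (1 - t * s)) (b := 1 - (1 - s) / (1 - t * s))
        (div_nonneg (by linarith) hD.le) (by linarith) (by ring)
      have heq : ((1 - s) / (1 - t * s)) • ((1 - t) • c + t • v)
          + (1 - (1 - s) / (1 - t * s)) • x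
          = (1 - t * (1 - s) / (1 - t * s)) • ((1 - s) • c + s • x)
            + (t * (1 - s) / (1 - t * s)) • v := by
        match_scalars <;> field_simp [(show (0:ℝ) < 1 - s * t by rw [mul_comm]; exact hD).ne'] <;> ring
      rwa [heq] at hmem

/-- `interior(interior(C)) = interior(C)` for a convex set `C`. -/
theorem stmt12 {V : Type*} [AddCommGroup V] [Module ℝ V] {C : Set V} (hC : Convex ℝ C) :
    algInterior (algInterior C) = algInterior C := by
  apply Set.Subset.antisymm
  · exact fun x hx => hx.1
  · intro c hc
    refine ⟨hc, fun v => ?_⟩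
    obtain ⟨t, ⟨ht0, ht1⟩, hx⟩ := hc.2 v
    refine ⟨t / 2, ⟨by linarith, by linarith⟩, ?_⟩
    have key := seg_mem_algInterior hC hc hx (s := 1/2) (by norm_num) (by norm_num)
    have heq : (1 - t / 2) • c + (t / 2) • v
        = (1 - 1/2 : ℝ) • c + (1/2 : ℝ) • ((1 - t) • c + t • v) := by
      match_scalars <;> ring
    rwa [heq]
end

section
/- Let v₁, …, vₙ and v be vectors in ℚ^m (equivalently, finitely supported ℚ-valued functions). If the linear equation Σᵢ rᵢ vᵢ = v has a solution with r₁, …, rₙ nonnegative real numbers, then it has a solution with r₁, …, rₙ nonnegative rational numbers. -/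
open Finset

private lemma dite_sum' {n : ℕ} {M : Type*} [AddCommMonoid M] (P : Fin n → Prop) [DecidablePred P]
    (f : {i // P i} → M) :
    ∑ i : Fin n, (if h : P i then f ⟨i, h⟩ else 0)
      = ∑ i : {i // P i}, f i := by
  rw [Finset.sum_dite, Finset.sum_const_zero, add_zero]
  exact Fintype.sum_equiv (Equiv.subtypeEquivRight (by simp)) _ _ (fun x => rfl)

/-- conic Carathéodory: a nonnegative solution can be replaced by one whose support
gives linearly independent vectors. -/
private lemma cara {m n : ℕ} (v : Fin n → Fin m → ℚ) (w : Fin m → ℚ) :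
    ∀ N (r : Fin n → ℝ), (Finset.univ.filter (fun i => r i ≠ 0)).card ≤ N →
      (∀ i, 0 ≤ r i) → (∀ j, ∑ i, r i * (v i j : ℝ) = (w j : ℝ)) →
      ∃ r' : Fin n → ℝ, (∀ i, 0 ≤ r' i) ∧ (∀ j, ∑ i, r' i * (v i j : ℝ) = (w j : ℝ)) ∧
        LinearIndependent ℝ (fun i : {i // r' i ≠ 0} => fun j => (v i.1 j : ℝ)) := by
  classical
  intro N
  induction N with
  | zero =>
    intro r hcard hr0 hreq
    refine ⟨r, hr0, hreq, ?_⟩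
    have : ∀ i, r i = 0 := by
      intro i
      by_contra hi
      have : i ∈ Finset.univ.filter (fun i => r i ≠ 0) := by simp [hi]
      have := Finset.card_pos.mpr ⟨i, this⟩
      omega
    have : IsEmpty {i // r i ≠ 0} := ⟨fun x => x.2 (this x.1)⟩
    exact linearIndependent_empty_type
  | succ N ih =>
    intro r hcard hr0 hreq
    by_cases hli : LinearIndependent ℝ (fun i : {i // r i ≠ 0} => fun j => (v i.1 j : ℝ))
    · exact ⟨r, hr0, hreq, hli⟩
    obtain ⟨g, hg, i₁, hgi₁⟩ := Fintype.not_linearIndependent_iff.mp hli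
    -- WLOG some coefficient is positive
    obtain ⟨g, hg, i₁, hgi₁⟩ :
        ∃ g : {i // r i ≠ 0} → ℝ, (∑ i, g i • (fun j => (v i.1 j : ℝ))) = 0 ∧
          ∃ i₁, 0 < g i₁ := by
      rcases lt_or_gt_of_ne hgi₁ with hneg | hpos
      · exact ⟨-g, by simpa using hg, i₁, by simpa using hneg⟩
      · exact ⟨g, hg, i₁, hpos⟩
    set c : Fin n → ℝ := fun i => if h : r i ≠ 0 then g ⟨i, h⟩ else 0 with hc
    have hcsum : ∀ j, ∑ i, c i * (v i j : ℝ) = 0 := by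
      intro j
      have := congrFun hg j
      simp only [Finset.sum_apply, Pi.zero_apply, Pi.smul_apply, smul_eq_mul] at this
      rw [hc]
      rw [show (fun i => (if h : r i ≠ 0 then g ⟨i, h⟩ else 0) * (v i j : ℝ))
            = fun i => (if h : r i ≠ 0 then g ⟨i, h⟩ * (v i j : ℝ) else 0) from ?_] at *
      · rw [dite_sum' (fun i => r i ≠ 0) (fun i => g i * (v i.1 j : ℝ))]
        exact this
      · funext i; split <;> simp
    have hci₁ : 0 < c i₁.1 := by simp [hc, i₁.2, hgi₁]
    set T := Finset.univ.filter (fun i => 0 < c i) with hT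
    have hTne : T.Nonempty := ⟨i₁.1, by simp [hT, hci₁]⟩
    obtain ⟨i₀, hi₀T, hmin⟩ := T.exists_min_image (fun i => r i / c i) hTne
    have hci₀ : 0 < c i₀ := (Finset.mem_filter.mp hi₀T).2
    set t := r i₀ / c i₀ with hdeft
    have ht0 : 0 ≤ t := div_nonneg (hr0 _) hci₀.le
    set r' : Fin n → ℝ := fun i => r i - t * c i with hr'
    have hr'0 : ∀ i, 0 ≤ r' i := by
      intro i
      by_cases hci : 0 < c i
      · have := hmin i (by simp [hT, hci])
        have : t * c i ≤ r i := by
          rw [hdeft] at *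
          calc r i₀ / c i₀ * c i ≤ r i / c i * c i := by
                exact mul_le_mul_of_nonneg_right this hci.le
            _ = r i := div_mul_cancel₀ _ hci.ne'
        simpa [hr'] using this
      · push_neg at hci
        have : t * c i ≤ 0 := mul_nonpos_of_nonneg_of_nonpos ht0 hci
        have := sub_nonneg.mpr (this.trans (hr0 i))
        simpa [hr'] using this
    have hr'eq : ∀ j, ∑ i, r' i * (v i j : ℝ) = (w j : ℝ) := by
      intro j
      have : ∑ i, r' i * (v i j : ℝ)
          = ∑ i, r i * (v i j : ℝ) - t * ∑ i, c i * (v i j : ℝ) := by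
        rw [Finset.mul_sum, ← Finset.sum_sub_distrib]
        exact Finset.sum_congr rfl (fun i _ => by ring)
      rw [this, hcsum j, hreq j, mul_zero, sub_zero]
    have hzero : ∀ i, r i = 0 → r' i = 0 := by
      intro i hi
      have : c i = 0 := by simp [hc, hi]
      simp [hr', this, hi]
    have hri₀ : r i₀ ≠ 0 := by
      intro h0
      have : c i₀ = 0 := by simp [hc, h0]
      rw [this] at hci₀; exact lt_irrefl 0 hci₀
    have hr'i₀ : r' i₀ = 0 := by
      simp only [hr']
      rw [hdeft, div_mul_cancel₀ _ hci₀.ne', sub_self]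
    have hss : Finset.univ.filter (fun i => r' i ≠ 0) ⊂ Finset.univ.filter (fun i => r i ≠ 0) := by
      constructor
      · intro i hi
        simp only [Finset.mem_filter, Finset.mem_univ, true_and] at *
        intro h0; exact hi (hzero i h0)
      · intro hsub
        have := hsub (by simp [hri₀] : i₀ ∈ Finset.univ.filter (fun i => r i ≠ 0))
        simp [hr'i₀] at this
    have hcard' : (Finset.univ.filter (fun i => r' i ≠ 0)).card ≤ N := by
      have := Finset.card_lt_card hss
      omega
    exact ih r' hcard' hr'0 hr'eq

/-- a linear system with rational data which has a nonnegative real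
solution has a nonnegative rational solution. -/
theorem stmt15 {m n : ℕ} (v : Fin n → Fin m → ℚ) (w : Fin m → ℚ)
    (h : ∃ r : Fin n → ℝ, (∀ i, 0 ≤ r i) ∧ ∀ j, ∑ i, r i * (v i j : ℝ) = (w j : ℝ)) :
    ∃ r : Fin n → ℚ, (∀ i, 0 ≤ r i) ∧ ∀ j, ∑ i, r i * v i j = w j := by
  classical
  obtain ⟨r₀, hr₀0, hr₀eq⟩ := h
  obtain ⟨r, hr0, hreq, hli⟩ := cara v w _ r₀ le_rfl hr₀0 hr₀eq
  set S := {i // r i ≠ 0}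
  -- step 1: w is in the ℚ-span of the support vectors
  have hwspan : w ∈ Submodule.span ℚ (Set.range (fun i : S => v i.1)) := by
    by_contra hw
    set p := Submodule.span ℚ (Set.range (fun i : S => v i.1)) with hp
    have hmkQ : p.mkQ w ≠ 0 := by
      rw [Submodule.mkQ_apply, ne_eq, Submodule.Quotient.mk_eq_zero]; exact hw
    have := (Module.forall_dual_apply_eq_zero_iff ℚ (p.mkQ w)).not.mpr hmkQ
    push_neg at this
    obtain ⟨φ, hφ⟩ := this
    set f : (Fin m → ℚ) →ₗ[ℚ] ℚ := φ.comp p.mkQ with hf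
    have hfw : f w ≠ 0 := hφ
    have hfv : ∀ i : S, f (v i.1) = 0 := by
      intro i
      have hmem : v i.1 ∈ p := Submodule.subset_span ⟨i, rfl⟩
      simp [hf, (Submodule.Quotient.mk_eq_zero p).mpr hmem]
    set y : Fin m → ℚ := fun j => f (fun k => if j = k then 1 else 0) with hy
    have hfx : ∀ x : Fin m → ℚ, f x = ∑ j, x j * y j := by
      intro x
      rw [LinearMap.pi_apply_eq_sum_univ f x]
      exact Finset.sum_congr rfl (fun j _ => by rw [smul_eq_mul, hy])
    -- real computation
    have hib : ∀ i : Fin n, r i * ∑ j, (v i j : ℝ) * (y j : ℝ) = 0 := by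
      intro i
      by_cases hi : r i ≠ 0
      · have h0 : ∑ j, v i j * y j = 0 := by rw [← hfx]; exact hfv ⟨i, hi⟩
        have : ∑ j, (v i j : ℝ) * (y j : ℝ) = 0 := by
          calc ∑ j, (v i j : ℝ) * (y j : ℝ) = ((∑ j, v i j * y j : ℚ) : ℝ) := by push_cast; rfl
            _ = 0 := by rw [h0]; norm_num
        rw [this, mul_zero]
      · push_neg at hi; rw [hi, zero_mul]
    have hreal : ∑ j, (w j : ℝ) * (y j : ℝ) = 0 := by
      calc ∑ j, (w j : ℝ) * (y j : ℝ)
          = ∑ j, (∑ i, r i * (v i j : ℝ)) * (y j : ℝ) := by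
            refine Finset.sum_congr rfl (fun j _ => by rw [hreq j])
        _ = ∑ j, ∑ i, r i * (v i j : ℝ) * (y j : ℝ) := by
            refine Finset.sum_congr rfl (fun j _ => by rw [Finset.sum_mul])
        _ = ∑ i, ∑ j, r i * (v i j : ℝ) * (y j : ℝ) := Finset.sum_comm
        _ = ∑ i, r i * ∑ j, (v i j : ℝ) * (y j : ℝ) := by
            refine Finset.sum_congr rfl (fun i _ => ?_)
            rw [Finset.mul_sum]
            exact Finset.sum_congr rfl (fun j _ => by ring)
        _ = 0 := Finset.sum_eq_zero (fun i _ => hib i)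
    have hcast : ((∑ j, w j * y j : ℚ) : ℝ) = 0 := by push_cast; exact hreal
    have : (∑ j, w j * y j : ℚ) = 0 := by exact_mod_cast hcast
    exact hfw (by rw [hfx w]; exact this)
  obtain ⟨c, hc⟩ := Submodule.mem_span_range_iff_exists_fun ℚ |>.mp hwspan
  -- step 2: rational coefficients agree with the real ones, hence are nonnegative
  have hcr : ∀ i : S, (c i : ℝ) = r i.1 := by
    have huniq := Fintype.linearIndependent_iff.mp hli
      (fun i : S => (c i : ℝ) - r i.1)
    have hzero : (∑ i : S, ((c i : ℝ) - r i.1) • (fun j => (v i.1 j : ℝ))) = 0 := by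
      funext j
      simp only [Finset.sum_apply, Pi.smul_apply, smul_eq_mul, Pi.zero_apply]
      have h1 : ∑ i : S, (c i : ℝ) * (v i.1 j : ℝ) = (w j : ℝ) := by
        have hq : ∑ i : S, c i * v i.1 j = w j := by simpa using congrFun hc j
        calc ∑ i : S, (c i : ℝ) * (v i.1 j : ℝ)
            = ((∑ i : S, c i * v i.1 j : ℚ) : ℝ) := by push_cast; rfl
          _ = (w j : ℝ) := by rw [hq]
      have h2 : ∑ i : S, (r i.1) * (v i.1 j : ℝ) = (w j : ℝ) := by
        rw [← hreq j]
        rw [← dite_sum' (fun i => r i ≠ 0) (fun i : S => r i.1 * (v i.1 j : ℝ))]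
        refine Finset.sum_congr rfl (fun i _ => ?_)
        split
        · rfl
        · next h => push_neg at h; simp [h]
      rw [show (fun i : S => ((c i : ℝ) - r i.1) * (v i.1 j : ℝ))
            = fun i : S => (c i : ℝ) * (v i.1 j : ℝ) - r i.1 * (v i.1 j : ℝ) from
          funext fun i => by ring] at *
      rw [Finset.sum_sub_distrib, h1, h2, sub_self]
    intro i
    have := huniq hzero i
    linarith [sub_eq_zero.mp this]
  refine ⟨fun i => if h : r i ≠ 0 then c ⟨i, h⟩ else 0, ?_, ?_⟩
  · intro i
    dsimp only
    split
    · next h =>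
      have : (0:ℝ) ≤ (c ⟨i, h⟩ : ℝ) := by rw [hcr ⟨i, h⟩]; exact hr0 i
      exact_mod_cast this
    · exact le_refl 0
  · intro j
    rw [show (fun i => (if h : r i ≠ 0 then c ⟨i, h⟩ else 0) * v i j)
          = fun i => (if h : r i ≠ 0 then c ⟨i, h⟩ * v i j else 0) from
        funext fun i => by split <;> simp]
    rw [dite_sum' (fun i => r i ≠ 0) (fun i : S => c i * v i.1 j)]
    simpa using congrFun hc j
end

section
/- Let Γ be a group generated by a finite symmetric set S with 1 ∉ S, let E = {(x, y) ∈ S × S : x⁻¹y ∈ S} be nonempty, μ(x) = |{ y ∈ S : (x, y) ∈ E }| / |E|, and let Λ = d*d/2 on L²(S, μ) and P the orthogonal projection onto constants, as in the link construction. Writing A_{x,y} = ⟨Aδ_y, δ_x⟩_{L²(S,μ)} for an operator A on L²(S, μ) (so I_{x,y} = δ_{x,y}μ(x) and P_{x,y} = μ(x)μ(y)), one has for every λ ≠ 0 the identity in ℝ[Γ]: Σ_{x,y ∈ S} (λ⁻¹Λ_{x,y} + P_{x,y} − I_{x,y}) · x⁻¹y = Δ_μ² − (2 − λ⁻¹)Δ_μ.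 -/
open MonoidAlgebra Finset RealInnerProductSpace

/-- the matrix-coefficient identity
`Σ_(x,y∈S) (λ⁻¹Λ_(x,y) + P_(x,y) − I_(x,y))·x⁻¹y = Δ² − (2−λ⁻¹)Δ`. -/
theorem stmt18 {Γ : Type*} [Group Γ] [DecidableEq Γ] (S : Finset Γ)
    (hSsymm : ∀ s ∈ S, s⁻¹ ∈ S) (hone : (1 : Γ) ∉ S)
    (hSgen : Subgroup.closure (S : Set Γ) = ⊤)
    (E : Finset (Γ × Γ)) (hE : E = (S ×ˢ S).filter (fun p => p.1⁻¹ * p.2 ∈ S))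
    (hEne : E.Nonempty)
    (μ : Γ → ℝ)
    (hμ : ∀ x ∈ S, μ x = ((S.filter (fun y => x⁻¹ * y ∈ S)).card : ℝ) / (E.card : ℝ))
    (δ : Γ → Γ → ℝ) (hδ : ∀ y v : Γ, δ y v = if v = y then 1 else 0)
    (Λent : Γ → Γ → ℝ)
    (hΛ : ∀ x y : Γ, Λent x y
      = (1 / 2) * ((E.card : ℝ)⁻¹ * ∑ p ∈ E, (δ y p.2 - δ y p.1) * (δ x p.2 - δ x p.1)))
    (Pent : Γ → Γ → ℝ) (hP : ∀ x y : Γ, Pent x y = μ x * μ y)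
    (Ient : Γ → Γ → ℝ) (hI : ∀ x y : Γ, Ient x y = if x = y then μ x else 0)
    (lam : ℝ) (hlam : lam ≠ 0) :
    ∑ x ∈ S, ∑ y ∈ S, (lam⁻¹ * Λent x y + Pent x y - Ient x y) • of ℝ Γ (x⁻¹ * y)
      = (1 - ∑ x ∈ S, μ x • of ℝ Γ x) * (1 - ∑ x ∈ S, μ x • of ℝ Γ x)
        - (2 - lam⁻¹) • (1 - ∑ x ∈ S, μ x • of ℝ Γ x) := by
  have hEcardpos : (0:ℝ) < (E.card : ℝ) := by exact_mod_cast Finset.card_pos.mpr hEne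
  have hEcard' : (E.card : ℝ) ≠ 0 := ne_of_gt hEcardpos
  have hmemE : ∀ p : Γ × Γ, p ∈ E ↔ p.1 ∈ S ∧ p.2 ∈ S ∧ p.1⁻¹ * p.2 ∈ S := by
    intro p
    simp [hE, Finset.mem_filter, Finset.mem_product, and_assoc]
  -- total count
  have hcardsum : ∑ x ∈ S, (S.filter (fun y => x⁻¹ * y ∈ S)).card = E.card := by
    rw [hE, Finset.card_filter, Finset.sum_product]
    exact Finset.sum_congr rfl fun x _ => Finset.card_filter _ _
  have hμsum : ∑ x ∈ S, μ x = 1 := by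
    calc ∑ x ∈ S, μ x
        = ∑ x ∈ S, ((S.filter (fun y => x⁻¹ * y ∈ S)).card : ℝ) / (E.card : ℝ) :=
          Finset.sum_congr rfl (fun x hx => hμ x hx)
      _ = (∑ x ∈ S, ((S.filter (fun y => x⁻¹ * y ∈ S)).card : ℝ)) / (E.card : ℝ) := by
          rw [Finset.sum_div]
      _ = 1 := by rw [← Nat.cast_sum, hcardsum]; field_simp
  -- μ is symmetric
  have hμinv : ∀ x ∈ S, μ x⁻¹ = μ x := by
    intro x hx
    rw [hμ _ (hSsymm x hx), hμ x hx]
    congr 2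
    rw [inv_inv]
    apply Finset.card_bij' (fun y _ => x * y) (fun z _ => x⁻¹ * z)
    · intro y hy
      simp only [Finset.mem_filter] at hy ⊢
      exact ⟨hy.2, by simpa using hy.1⟩
    · intro z hz
      simp only [Finset.mem_filter] at hz ⊢
      refine ⟨hz.2, by simpa using hz.1⟩
    · intro y hy; group
    · intro z hz; group
  set m : MonoidAlgebra ℝ Γ := ∑ x ∈ S, μ x • of ℝ Γ x with hm
  -- P sum
  have hPsum : ∑ x ∈ S, ∑ y ∈ S, Pent x y • of ℝ Γ (x⁻¹ * y) = m * m := by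
    rw [hm, Finset.sum_mul_sum]
    rw [Finset.sum_equiv (Equiv.inv Γ) (g := fun x => ∑ y ∈ S, (μ x • of ℝ Γ x) * (μ y • of ℝ Γ y))
      (t := S) (fun x => ⟨fun h => hSsymm x h, fun h => by simpa using hSsymm _ h⟩)
      (fun x hx => ?_)]
    simp only [Equiv.inv_apply]
    refine Finset.sum_congr rfl fun y hy => ?_
    rw [hP, smul_mul_assoc, mul_smul_comm, smul_smul, ← map_mul (of ℝ Γ), hμinv x hx]
  -- I sum
  have hIsum : ∑ x ∈ S, ∑ y ∈ S, Ient x y • of ℝ Γ (x⁻¹ * y) = 1 := by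
    have step : ∀ x ∈ S, ∑ y ∈ S, Ient x y • of ℝ Γ (x⁻¹ * y) = μ x • (1 : MonoidAlgebra ℝ Γ) := by
      intro x hx
      rw [Finset.sum_eq_single x]
      · simp [hI, inv_mul_cancel, MonoidAlgebra.one_def, MonoidAlgebra.one_def, Finsupp.smul_single]
      · intro y hy hyx
        simp [hI, (Ne.symm hyx : x ≠ y)]
      · intro h; exact absurd hx h
    rw [Finset.sum_congr rfl step, ← Finset.sum_smul, hμsum, one_smul]
  -- fiber cardinality
  have hfiber : ∀ s ∈ S, ((E.filter (fun p => p.1⁻¹ * p.2 = s)).card : ℝ) = μ s * (E.card : ℝ) := by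
    intro s hs
    have hcard : (E.filter (fun p => p.1⁻¹ * p.2 = s)).card
        = (S.filter (fun y => s⁻¹ * y ∈ S)).card := by
      apply Finset.card_bij' (fun p _ => p.1⁻¹) (fun y _ => (y⁻¹, y⁻¹ * s))
      · intro p hp
        simp only [Finset.mem_filter] at hp ⊢
        obtain ⟨hpE, hps⟩ := hp
        obtain ⟨h1, h2, h3⟩ := (hmemE p).mp hpE
        refine ⟨hSsymm _ h1, ?_⟩
        have : s⁻¹ * p.1⁻¹ = p.2⁻¹ := by rw [← hps]; group
        rw [this]; exact hSsymm _ h2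
      · intro y hy
        simp only [Finset.mem_filter] at hy ⊢
        obtain ⟨hyS, hsy⟩ := hy
        constructor
        · rw [hmemE]
          refine ⟨hSsymm _ hyS, ?_, ?_⟩
          · have : y⁻¹ * s = (s⁻¹ * y)⁻¹ := by group
            rw [this]; exact hSsymm _ hsy
          · simpa using hs
        · simp
      · intro p hp
        have hps := (Finset.mem_filter.mp hp).2
        simp only [inv_inv]
        exact Prod.ext rfl (by rw [← hps]; group)
      · intro y hy; simp
    rw [hcard, hμ s hs, div_mul_cancel₀ _ hEcard']
  -- sum over E of of(p.1⁻¹ p.2)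
  have hEsum : ∑ p ∈ E, of ℝ Γ (p.1⁻¹ * p.2) = (E.card : ℝ) • m := by
    rw [← Finset.sum_fiberwise_of_maps_to (g := fun p : Γ × Γ => p.1⁻¹ * p.2)
      (t := S) (fun p hp => ((hmemE p).mp hp).2.2) (fun p => of ℝ Γ (p.1⁻¹ * p.2))]
    have step : ∀ s ∈ S, ∑ p ∈ E.filter (fun p => p.1⁻¹ * p.2 = s), of ℝ Γ (p.1⁻¹ * p.2)
        = (μ s * (E.card : ℝ)) • of ℝ Γ s := by
      intro s hs
      rw [Finset.sum_congr rfl (fun p hp => by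
        rw [(Finset.mem_filter.mp hp).2]), Finset.sum_const,
        ← Nat.cast_smul_eq_nsmul ℝ, hfiber s hs]
    rw [Finset.sum_congr rfl step, hm, Finset.smul_sum]
    refine Finset.sum_congr rfl fun s hs => ?_
    rw [smul_smul, mul_comm]
  -- swap symmetry of E
  have hswap : ∑ p ∈ E, of ℝ Γ (p.2⁻¹ * p.1) = ∑ p ∈ E, of ℝ Γ (p.1⁻¹ * p.2) := by
    apply Finset.sum_equiv (Equiv.prodComm Γ Γ)
    · intro p
      rw [hmemE, hmemE]
      constructor
      · rintro ⟨h1, h2, h3⟩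
        exact ⟨h2, h1, by simpa using hSsymm _ h3⟩
      · rintro ⟨h1, h2, h3⟩
        exact ⟨h2, h1, by simpa using hSsymm _ h3⟩
    · intro p hp; rfl
  -- the Λ sum
  have hΛsum : ∑ x ∈ S, ∑ y ∈ S, Λent x y • of ℝ Γ (x⁻¹ * y) = 1 - m := by
    have key : ∀ p ∈ E, ∑ x ∈ S, ∑ y ∈ S,
        (((δ y p.2 - δ y p.1) * (δ x p.2 - δ x p.1)) • of ℝ Γ (x⁻¹ * y))
        = (2 : MonoidAlgebra ℝ Γ) - of ℝ Γ (p.1⁻¹ * p.2) - of ℝ Γ (p.2⁻¹ * p.1) := by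
      intro p hp
      obtain ⟨h1, h2, h3⟩ := (hmemE p).mp hp
      simp only [hδ, sub_mul, mul_sub, ite_mul, mul_ite, one_mul, mul_one, zero_mul, mul_zero,
        sub_smul, ite_smul, zero_smul, one_smul, Finset.sum_sub_distrib, Finset.sum_ite_eq,
        h1, h2, if_true]
      simp only [Finset.sum_ite_irrel, Finset.sum_const_zero, Finset.sum_sub_distrib,
        Finset.sum_ite_eq, h1, h2, if_true, inv_mul_cancel, map_one]
      rw [show (2 : MonoidAlgebra ℝ Γ) = (1 : MonoidAlgebra ℝ Γ) + 1 from
        one_add_one_eq_two.symm]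
      abel
    calc ∑ x ∈ S, ∑ y ∈ S, Λent x y • of ℝ Γ (x⁻¹ * y)
        = ((1/2) * (E.card : ℝ)⁻¹) • ∑ p ∈ E, ∑ x ∈ S, ∑ y ∈ S,
            (((δ y p.2 - δ y p.1) * (δ x p.2 - δ x p.1)) • of ℝ Γ (x⁻¹ * y)) := by
          have step1 : ∀ x ∈ S, ∀ y ∈ S, Λent x y • of ℝ Γ (x⁻¹ * y)
              = ∑ p ∈ E, ((1/2) * (E.card : ℝ)⁻¹) •
                  (((δ y p.2 - δ y p.1) * (δ x p.2 - δ x p.1)) • of ℝ Γ (x⁻¹ * y)) := by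
            intro x hx y hy
            rw [hΛ, ← mul_assoc, mul_smul, Finset.sum_smul, Finset.smul_sum]
          rw [Finset.sum_congr rfl fun x hx =>
            Finset.sum_congr rfl fun y hy => step1 x hx y hy]
          rw [Finset.sum_congr rfl fun x (_ : x ∈ S) => Finset.sum_comm, Finset.sum_comm]
          simp only [← Finset.smul_sum]
      _ = ((1/2) * (E.card : ℝ)⁻¹) • ((E.card : ℝ) • (2 : MonoidAlgebra ℝ Γ)
            - (E.card : ℝ) • m - (E.card : ℝ) • m) := by
          rw [Finset.sum_congr rfl key]
          rw [Finset.sum_sub_distrib, Finset.sum_sub_distrib, hswap, hEsum,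
            Finset.sum_const, ← Nat.cast_smul_eq_nsmul ℝ]
      _ = 1 - m := by
          simp only [smul_sub, smul_smul]
          have hc : (1/2 : ℝ) * (E.card : ℝ)⁻¹ * (E.card : ℝ) = 1/2 := by
            rw [mul_assoc, inv_mul_cancel₀ hEcard', mul_one]
          rw [hc]
          have h2 : ((1:ℝ)/2) • (2 : MonoidAlgebra ℝ Γ) = 1 := by
            rw [show (2 : MonoidAlgebra ℝ Γ) = (2:ℝ) • (1 : MonoidAlgebra ℝ Γ) from by
              rw [two_smul]; norm_num, smul_smul]
            norm_num
          rw [h2, sub_sub, ← add_smul]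
          norm_num
  -- assemble
  calc ∑ x ∈ S, ∑ y ∈ S, (lam⁻¹ * Λent x y + Pent x y - Ient x y) • of ℝ Γ (x⁻¹ * y)
      = lam⁻¹ • (∑ x ∈ S, ∑ y ∈ S, Λent x y • of ℝ Γ (x⁻¹ * y))
        + (∑ x ∈ S, ∑ y ∈ S, Pent x y • of ℝ Γ (x⁻¹ * y))
        - (∑ x ∈ S, ∑ y ∈ S, Ient x y • of ℝ Γ (x⁻¹ * y)) := by
        simp only [sub_smul, add_smul, mul_smul, Finset.sum_sub_distrib,
          Finset.sum_add_distrib, ← Finset.smul_sum]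
    _ = lam⁻¹ • ((1:MonoidAlgebra ℝ Γ) - m) + m * m - 1 := by rw [hΛsum, hPsum, hIsum]
    _ = (1 - m) * (1 - m) - (2 - lam⁻¹) • (1 - m) := by
        simp only [← hm, mul_sub, sub_mul, one_mul, mul_one, sub_smul, smul_sub, two_smul]
        abel
end
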